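/- arXiv:1502.07823 — 4 statements merged into one kernel-verified Lean document; each statement's English description precedes it below -/
import Mathlib

section
/- Let μ be a matching induced by a feasible manipulation with reported profile P. If each manipulator w modifies her reported list by moving the top two entries of her received-proposal list (ordered as in her reported list) to the top, ordering all other men arbitrarily below, then the induced matching of the modified profile is still μ. -/
open List

/-- A stable-matching instance: each agent has a strict preference order
(a duplicate-free list, earlier = more preferred) over a subset of the other side. -/
structure SMInstance (M W : Type*) where
  mpref : M → List W
  wpref : W → List M
  mnodup : ∀ m, (mpref m).Nodup
  wnodup : ∀ w, (wpref w).Nodup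

/-- A matching: a pairing of men and women (agents may be unmatched),
involutive on matched pairs. -/
structure Matching (M W : Type*) where
  μm : M → Option W
  μw : W → Option M
  consistent : ∀ m w, μm m = some w ↔ μw w = some m

section Defs

variable {M W : Type*} [DecidableEq M] [DecidableEq W]

/-- Man `m` strictly prefers woman `w` to the (possibly empty) assignment `o`. -/
def SMInstance.mPref (I : SMInstance M W) (m : M) (w : W) : Option W → Prop
  | some w' => w ∈ I.mpref m ∧ (w' ∉ I.mpref m ∨ (I.mpref m).idxOf w < (I.mpref m).idxOf w')
  | none => w ∈ I.mpref m

/-- Woman `w` strictly prefers man `m` to the (possibly empty) assignment `o`. -/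
def SMInstance.wPref (I : SMInstance M W) (w : W) (m : M) : Option M → Prop
  | some m' => m ∈ I.wpref w ∧ (m' ∉ I.wpref w ∨ (I.wpref w).idxOf m < (I.wpref w).idxOf m')
  | none => m ∈ I.wpref w

/-- Man `m` weakly prefers assignment `o₁` to assignment `o₂`. -/
def SMInstance.mWeak (I : SMInstance M W) (m : M) (o₁ o₂ : Option W) : Prop :=
  o₁ = o₂ ∨ ∃ w, o₁ = some w ∧ I.mPref m w o₂

/-- Woman `w` weakly prefers assignment `o₁` to assignment `o₂`. -/
def SMInstance.wWeak (I : SMInstance M W) (w : W) (o₁ o₂ : Option M) : Prop :=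
  o₁ = o₂ ∨ ∃ m, o₁ = some m ∧ I.wPref w m o₂

def IndivRational (I : SMInstance M W) (μ : Matching M W) : Prop :=
  ∀ m w, μ.μm m = some w → w ∈ I.mpref m ∧ m ∈ I.wpref w

def BlockingPair (I : SMInstance M W) (μ : Matching M W) (m : M) (w : W) : Prop :=
  μ.μm m ≠ some w ∧ I.mPref m w (μ.μm m) ∧ I.wPref w m (μ.μw w)

def IsStable (I : SMInstance M W) (μ : Matching M W) : Prop :=
  IndivRational I μ ∧ ∀ m w, ¬ BlockingPair I μ m w

/-- The men-optimal stable matching (= output of men-proposing Gale–Shapley). -/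
def IsMenOptimal (I : SMInstance M W) (μ : Matching M W) : Prop :=
  IsStable I μ ∧ ∀ μ', IsStable I μ' → ∀ m, I.mWeak m (μ.μm m) (μ'.μm m)

/-- The women-optimal stable matching. -/
def IsWomenOptimal (I : SMInstance M W) (μ : Matching M W) : Prop :=
  IsStable I μ ∧ ∀ μ', IsStable I μ' → ∀ w, I.wWeak w (μ.μw w) (μ'.μw w)

/-- `I'` arises from `I` by arbitrary misreports of the women in `L`
(all men and all women outside `L` are truthful). -/
def GeneralManip (I I' : SMInstance M W) (L : Set W) : Prop :=
  I'.mpref = I.mpref ∧ ∀ w ∉ L, I'.wpref w = I.wpref w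

/-- `I'` arises from `I` by truncation (prefix) misreports of the women in `L`. -/
def TruncManip (I I' : SMInstance M W) (L : Set W) : Prop :=
  GeneralManip I I' L ∧ ∀ w ∈ L, (I'.wpref w) <+: (I.wpref w)

/-- `I'` arises from `I` by permutation misreports of the women in `L`. -/
def PermManip (I I' : SMInstance M W) (L : Set W) : Prop :=
  GeneralManip I I' L ∧ ∀ w ∈ L, (I'.wpref w).Perm (I.wpref w)

/-- Woman `w` is strictly better off in `μ₁` than in `μ₂` (true preferences). -/
def wStrictBetter (I : SMInstance M W) (w : W) (μ₁ μ₂ : Matching M W) : Prop :=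
  ∃ m, μ₁.μw w = some m ∧ I.wPref w m (μ₂.μw w)

/-- The set `δ(w)` of suitors of `w` at matching `μ`: the men who prefer `w`
to their own partner in `μ`. -/
def suitorSet (I : SMInstance M W) (μ : Matching M W) (w : W) : Set M :=
  {m | I.mPref m w (μ.μm m)}

/-- The suitor graph of Kobayashi–Matsui, on vertices `M ⊕ W ⊕ {s}`. -/
inductive SuitorEdge (I : SMInstance M W) (L : Set W) (μ : Matching M W) :
    M ⊕ W ⊕ Unit → M ⊕ W ⊕ Unit → Prop
  | partner_wm (w : W) (m : M) : μ.μw w = some m →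
      SuitorEdge I L μ (Sum.inr (Sum.inl w)) (Sum.inl m)
  | partner_mw (w : W) (m : M) : μ.μw w = some m →
      SuitorEdge I L μ (Sum.inl m) (Sum.inr (Sum.inl w))
  | suitor_manip (w : W) (m : M) : w ∈ L → m ∈ suitorSet I μ w →
      SuitorEdge I L μ (Sum.inl m) (Sum.inr (Sum.inl w))
  | suitor_honest (w : W) (m : M) : w ∉ L → m ∈ suitorSet I μ w →
      (∀ m' ∈ suitorSet I μ w, m' ≠ m → (I.wpref w).idxOf m < (I.wpref w).idxOf m') →
      SuitorEdge I L μ (Sum.inl m) (Sum.inr (Sum.inl w))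
  | fromSource (w : W) : suitorSet I μ w = ∅ →
      SuitorEdge I L μ (Sum.inr (Sum.inr ())) (Sum.inr (Sum.inl w))

/-- Reachability in the suitor graph. -/
abbrev SReach (I : SMInstance M W) (L : Set W) (μ : Matching M W) :
    (M ⊕ W ⊕ Unit) → (M ⊕ W ⊕ Unit) → Prop :=
  Relation.ReflTransGen (SuitorEdge I L μ)

/-- A reduced table (shortlists) for instance `I`: sublists of the true lists,
with mutual membership, where each man is engaged to the head of his reduced list,
each woman to the last man of hers, and every removed man is worse for the woman
than her current partner. -/
structure ReducedTable (I : SMInstance M W) where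
  rm : M → List W
  rw : W → List M
  rmSub : ∀ m, (rm m).Sublist (I.mpref m)
  rwSub : ∀ w, (rw w).Sublist (I.wpref w)
  mem_iff : ∀ m w, w ∈ rm m ↔ m ∈ rw w
  engaged : ∀ m w, (rm m).head? = some w ↔ (rw w).getLast? = some m
  removed_worse : ∀ m w p, m ∈ I.wpref w → m ∉ rw w → (rw w).getLast? = some p →
      (I.wpref w).idxOf p < (I.wpref w).idxOf m

/-- A rotation: a cyclic sequence of (distinct) men `m₀,…,m_{r-1}`
together with their current partners `w₀,…,w_{r-1}`. -/
structure Rot (M W : Type*) where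
  r : ℕ
  hr : 2 ≤ r
  ms : Fin r → M
  ws : Fin r → W
  inj : Function.Injective ms

/-- Cyclic successor of an index of a rotation. -/
def Rot.nxt (R : Rot M W) (i : Fin R.r) : Fin R.r :=
  ⟨((i : ℕ) + 1) % R.r, Nat.mod_lt _ (by have := R.hr; omega)⟩

/-- The reduced list of woman `w` determined by the stable matching `μ`:
the men weakly preferred to her current partner. -/
def reducedListW (I : SMInstance M W) (μ : Matching M W) (w : W) : List M :=
  match μ.μw w with
  | some p => (I.wpref w).filter (fun m => decide ((I.wpref w).idxOf m ≤ (I.wpref w).idxOf p))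
  | none => []

/-- The reduced list of man `m` determined by the stable matching `μ`. -/
def reducedListM (I : SMInstance M W) (μ : Matching M W) (m : M) : List W :=
  (I.mpref m).filter (fun w => decide (m ∈ reducedListW I μ w))

/-- The rotation `R` is exposed in (the reduced table of) the matching `μ`:
`w_i` is first and `w_{i+1}` second on `m_i`'s reduced list. -/
def Exposed (I : SMInstance M W) (μ : Matching M W) (R : Rot M W) : Prop :=
  ∀ i, (reducedListM I μ (R.ms i)).head? = some (R.ws i) ∧
       (reducedListM I μ (R.ms i))[1]? = some (R.ws (R.nxt i))

/-- `μ'` is the matching obtained from `μ` by eliminating the rotation `R`: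
each `m_i` is now matched with `w_{i+1}`, everyone else is unchanged. -/
def ElimStep (R : Rot M W) (μ μ' : Matching M W) : Prop :=
  (∀ i, μ'.μm (R.ms i) = some (R.ws (R.nxt i))) ∧
  ∀ m, (∀ i, m ≠ R.ms i) → μ'.μm m = μ.μm m

/-- `ElimSeq I μ S μ'`: the matching `μ'` is obtained from `μ` by successively
eliminating the (exposed-at-the-time) rotations of the set `S`. -/
inductive ElimSeq (I : SMInstance M W) : Matching M W → Set (Rot M W) → Matching M W → Prop
  | refl (μ : Matching M W) : ElimSeq I μ ∅ μ
  | step {μ μ' μ'' : Matching M W} {R : Rot M W} {S : Set (Rot M W)} :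
      Exposed I μ R → ElimStep R μ μ' → ElimSeq I μ' S μ'' → ElimSeq I μ (insert R S) μ''

/-- The rotation `R` moves man `m` from woman `w` to woman `w'`. -/
def Moves (R : Rot M W) (m : M) (w w' : W) : Prop :=
  ∃ i, R.ms i = m ∧ R.ws i = w ∧ R.ws (R.nxt i) = w'

/-- `R₁` explicitly precedes `R₂`: they share a man `m` such that `R₁` moves `m`
to some woman `w` and `R₂` moves `m` away from `w`. -/
def ExplicitPrec (R₁ R₂ : Rot M W) : Prop :=
  ∃ m w w₁ w₂, Moves R₁ m w₁ w ∧ Moves R₂ m w w₂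

/-- The precedence relation `≺`: transitive closure of explicit precedence. -/
def Prec (R₁ R₂ : Rot M W) : Prop :=
  Relation.TransGen ExplicitPrec R₁ R₂

/-- `R` is a rotation of the instance `I`: it is exposed at some matching
obtained from the men-optimal matching by eliminating rotations. -/
def IsRotOf (I : SMInstance M W) (R : Rot M W) : Prop :=
  ∃ μ0 S μ', IsMenOptimal I μ0 ∧ ElimSeq I μ0 S μ' ∧ Exposed I μ' R

/-- A closed (downward-closed under `≺`) set of rotations of the instance `I`. -/
def IsClosedSet (I : SMInstance M W) (𝓡 : Set (Rot M W)) : Prop :=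
  (∀ R ∈ 𝓡, IsRotOf I R) ∧ ∀ R ∈ 𝓡, ∀ R', IsRotOf I R' → Prec R' R → R' ∈ 𝓡

/-- The closed set `𝓡` can be eliminated: the matching obtained by eliminating it
is stable w.r.t. the true profile and is the men-optimal stable matching of some
profile in which only the women of `L` misreport. -/
def CanEliminate (I : SMInstance M W) (L : Set W) (𝓡 : Set (Rot M W)) : Prop :=
  ∃ μ0 μ', IsMenOptimal I μ0 ∧ ElimSeq I μ0 𝓡 μ' ∧ IsStable I μ' ∧
    ∃ I', GeneralManip I I' L ∧ IsMenOptimal I' μ'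

/-- `R` is a maximal rotation of the set `𝓡`. -/
def MaxRot (𝓡 : Set (Rot M W)) (R : Rot M W) : Prop :=
  R ∈ 𝓡 ∧ ∀ R' ∈ 𝓡, ¬ Prec R R'

/-- Whether man `m` proposes to woman `w` in the men-proposing Gale–Shapley run
whose outcome is `μ` (he proposes to every woman he weakly prefers to his final partner). -/
def proposedToB (I : SMInstance M W) (μ : Matching M W) (m : M) (w : W) : Bool :=
  decide (w ∈ I.mpref m) &&
    (match μ.μm m with
     | none => true
     | some w' => decide ((I.mpref m).idxOf w ≤ (I.mpref m).idxOf w'))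

/-- The proposal list `Pro(w)`: all men who proposed to `w`, ordered as in her stated list. -/
def proposals (I : SMInstance M W) (μ : Matching M W) (w : W) : List M :=
  (I.wpref w).filter (fun m => proposedToB I μ m w)

/-- `μ` is feasible for the permutation-manipulation game of coalition `L`. -/
def FeasibleM (I : SMInstance M W) (L : Set W) (μ : Matching M W) : Prop :=
  IsStable I μ ∧ ∃ I', PermManip I I' L ∧ IsMenOptimal I' μ

/-- `μ` is Pareto-optimal among feasible matchings (for the women). -/
def ParetoOptimal (I : SMInstance M W) (L : Set W) (μ : Matching M W) : Prop :=
  FeasibleM I L μ ∧ ¬∃ μ', FeasibleM I L μ' ∧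
    (∀ w, I.wWeak w (μ'.μw w) (μ.μw w)) ∧ (∃ w, wStrictBetter I w μ' μ)

/-- The reported profile `I'` with induced matching `μ` is a super-strong Nash
equilibrium of the permutation-manipulation game under the feasibility assumption. -/
def SuperStrongNE (I : SMInstance M W) (L : Set W) (I' : SMInstance M W)
    (μ : Matching M W) : Prop :=
  PermManip I I' L ∧ IsMenOptimal I' μ ∧ IsStable I μ ∧
  ∀ (Ls : Set W), Ls ⊆ L → ∀ I'' μ'',
    PermManip I I'' L → (∀ w ∉ Ls, I''.wpref w = I'.wpref w) →
    IsMenOptimal I'' μ'' → IsStable I μ'' →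
    ¬((∀ l ∈ Ls, I.wWeak l (μ''.μw l) (μ.μw l)) ∧ ∃ l ∈ Ls, wStrictBetter I l μ'' μ)

end Defs


section ListLemmas
variable {α : Type*} [DecidableEq α]

theorem rpl_filtMin (l : List α) (f : α → Bool) :
    ∀ {x : α} {t : List α}, l.filter f = x :: t → ∀ y ∈ l, f y = true → l.idxOf x ≤ l.idxOf y := by
  induction l with
  | nil => intro x t h; simp at h
  | cons a l ih =>
    intro x t h y hy hfy
    by_cases hfa : f a = true
    · rw [List.filter_cons_of_pos hfa] at h
      obtain ⟨rfl, rfl⟩ : a = x ∧ l.filter f = t := by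
        constructor
        · exact (List.cons.injEq _ _ _ _ ▸ h).1
        · exact (List.cons.injEq _ _ _ _ ▸ h).2
      simp
    · rw [List.filter_cons_of_neg hfa] at h
      have hxl : x ∈ l := by
        have : x ∈ l.filter f := by rw [h]; exact mem_cons_self
        exact mem_of_mem_filter this
      have hya : y ≠ a := by rintro rfl; exact hfa hfy
      have hxa : x ≠ a := by
        rintro rfl
        have : f x = true := by
          have : x ∈ l.filter f := by rw [h]; exact mem_cons_self
          exact of_mem_filter this
        exact hfa this
      have hyl : y ∈ l := by
        rcases mem_cons.mp hy with h' | h'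
        · exact absurd h' hya
        · exact h'
      rw [List.idxOf_cons_ne _ (Ne.symm hxa), List.idxOf_cons_ne _ (Ne.symm hya)]
      exact Nat.succ_le_succ (ih h y hyl hfy)

theorem rpl_filtHead (l : List α) (f : α → Bool) (hnd : l.Nodup) :
    ∀ {x : α}, x ∈ l → f x = true →
      (∀ y ∈ l, f y = true → y ≠ x → l.idxOf x < l.idxOf y) →
      ∃ t, l.filter f = x :: t := by
  induction l with
  | nil => intro x hx; simp at hx
  | cons a l ih =>
    intro x hx hfx hmin
    by_cases hax : a = x
    · subst hax
      rw [List.filter_cons_of_pos hfx]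
      exact ⟨_, rfl⟩
    · have hxl : x ∈ l := by
        rcases mem_cons.mp hx with h' | h'
        · exact absurd h'.symm hax
        · exact h'
      have hfa : f a = false := by
        by_contra hfa
        have hfa' : f a = true := by simpa using hfa
        have h1 := hmin a (mem_cons_self) hfa' hax
        have hxa : x ≠ a := fun h => hax h.symm
        rw [List.idxOf_cons_self, List.idxOf_cons_ne _ (Ne.symm hxa)] at h1
        omega
      rw [List.filter_cons_of_neg (by simp [hfa])]
      refine ih hnd.of_cons hxl hfx ?_
      intro y hy hfy hyx
      have hya : y ≠ a := by rintro rfl; simp [hfa] at hfy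
      have hxa : x ≠ a := fun h => hax h.symm
      have := hmin y (mem_cons_of_mem _ hy) hfy hyx
      rw [List.idxOf_cons_ne _ (Ne.symm hxa), List.idxOf_cons_ne _ (Ne.symm hya)] at this
      omega

theorem rpl_filtSecond (l : List α) (f : α → Bool) :
    ∀ {x s : α} {t : List α}, l.filter f = x :: s :: t →
      ∀ y ∈ l, f y = true → y ≠ x → l.idxOf s ≤ l.idxOf y := by
  induction l with
  | nil => intro x s t h; simp at h
  | cons a l ih =>
    intro x s t h y hy hfy hyx
    by_cases hfa : f a = true
    · rw [List.filter_cons_of_pos hfa] at h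
      have hax : a = x := (List.cons.injEq _ _ _ _ ▸ h).1
      have ht : l.filter f = s :: t := (List.cons.injEq _ _ _ _ ▸ h).2
      subst hax
      have hya : y ≠ a := hyx
      have hyl : y ∈ l := by
        rcases mem_cons.mp hy with h' | h'
        · exact absurd h' hya
        · exact h'
      have hsl : s ∈ l := mem_of_mem_filter (by rw [ht]; exact mem_cons_self)
      have hs := rpl_filtMin l f ht y hyl hfy
      by_cases hsa : s = a
      · subst hsa; simp
      · rw [List.idxOf_cons_ne _ (Ne.symm hsa), List.idxOf_cons_ne _ (Ne.symm hya)]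
        omega
    · rw [List.filter_cons_of_neg (by simp [hfa])] at h
      have hya : y ≠ a := by rintro rfl; simp [hfa] at hfy
      have hyl : y ∈ l := by
        rcases mem_cons.mp hy with h' | h'
        · exact absurd h' hya
        · exact h'
      have hsl : s ∈ l := mem_of_mem_filter (by rw [h]; exact mem_cons_of_mem _ (mem_cons_self))
      by_cases hsa : s = a
      · subst hsa
        have : f s = true := of_mem_filter (l := l) (by rw [h]; exact mem_cons_of_mem _ (mem_cons_self))
        simp [this] at hfa
      · rw [List.idxOf_cons_ne _ (Ne.symm hsa), List.idxOf_cons_ne _ (Ne.symm hya)]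
        exact Nat.succ_le_succ (ih h y hyl hfy hyx)

theorem rpl_idx_lt_or_lt {l : List α} {a b : α} (ha : a ∈ l) (hb : b ∈ l) (hne : a ≠ b) :
    l.idxOf a < l.idxOf b ∨ l.idxOf b < l.idxOf a := by
  rcases Nat.lt_trichotomy (l.idxOf a) (l.idxOf b) with h | h | h
  · exact Or.inl h
  · exact absurd ((List.idxOf_inj ha).mp h) hne
  · exact Or.inr h

end ListLemmas

set_option linter.unusedSectionVars false
section Chunk2
variable {M W : Type*} [DecidableEq M] [DecidableEq W]
variable {C : SMInstance M W}

theorem rpl_mPref_some_iff {x : M} {y w' : W} :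
    C.mPref x y (some w') ↔
      (y ∈ C.mpref x ∧ (w' ∉ C.mpref x ∨ (C.mpref x).idxOf y < (C.mpref x).idxOf w')) :=
  Iff.rfl

theorem rpl_mPref_none_iff {x : M} {y : W} : C.mPref x y none ↔ y ∈ C.mpref x := Iff.rfl

theorem rpl_wPref_some_iff {w : W} {m p : M} :
    C.wPref w m (some p) ↔
      (m ∈ C.wpref w ∧ (p ∉ C.wpref w ∨ (C.wpref w).idxOf m < (C.wpref w).idxOf p)) :=
  Iff.rfl

theorem rpl_wPref_none_iff {w : W} {m : M} : C.wPref w m none ↔ m ∈ C.wpref w := Iff.rfl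

theorem rpl_mPref_mem {x : M} {y : W} {o : Option W} (h : C.mPref x y o) : y ∈ C.mpref x := by
  cases o with
  | none => exact h
  | some w' => exact h.1

theorem rpl_wPref_mem {w : W} {m : M} {o : Option M} (h : C.wPref w m o) : m ∈ C.wpref w := by
  cases o with
  | none => exact h
  | some p => exact h.1

theorem rpl_mPref_ne {x : M} {y : W} {o : Option W} (h : C.mPref x y o) : o ≠ some y := by
  rintro rfl
  rcases h.2 with h' | h'
  · exact h' h.1
  · exact Nat.lt_irrefl _ h'

theorem rpl_wPref_ne {w : W} {m : M} {o : Option M} (h : C.wPref w m o) : o ≠ some m := by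
  rintro rfl
  rcases h.2 with h' | h'
  · exact h' h.1
  · exact Nat.lt_irrefl _ h'

theorem rpl_mPref_lt {x : M} {y w' : W} (h : C.mPref x y (some w')) (hw' : w' ∈ C.mpref x) :
    (C.mpref x).idxOf y < (C.mpref x).idxOf w' := by
  rcases h.2 with h' | h'
  · exact absurd hw' h'
  · exact h'

theorem rpl_wPref_lt {w : W} {m p : M} (h : C.wPref w m (some p)) (hp : p ∈ C.wpref w) :
    (C.wpref w).idxOf m < (C.wpref w).idxOf p := by
  rcases h.2 with h' | h'
  · exact absurd hp h'
  · exact h'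

theorem rpl_mPref_trans {x : M} {y w : W} {o : Option W}
    (h1 : C.mPref x y (some w)) (h2 : C.mPref x w o) : C.mPref x y o := by
  have hw : w ∈ C.mpref x := rpl_mPref_mem h2
  have hlt := rpl_mPref_lt h1 hw
  cases o with
  | none => exact h1.1
  | some w0 =>
    refine ⟨h1.1, ?_⟩
    rcases h2.2 with h' | h'
    · exact Or.inl h'
    · exact Or.inr (Nat.lt_trans hlt h')

theorem rpl_mTotal {x : M} {y : W} (hy : y ∈ C.mpref x) (o : Option W)
    (ho : ∀ w', o = some w' → w' ∈ C.mpref x) :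
    C.mPref x y o ∨ o = some y ∨ ∃ w', o = some w' ∧ C.mPref x w' (some y) := by
  cases o with
  | none => exact Or.inl hy
  | some w' =>
    have hw' : w' ∈ C.mpref x := ho w' rfl
    by_cases hne : w' = y
    · exact Or.inr (Or.inl (by rw [hne]))
    · rcases rpl_idx_lt_or_lt hy hw' (fun h => hne h.symm) with h | h
      · exact Or.inl ⟨hy, Or.inr h⟩
      · exact Or.inr (Or.inr ⟨w', rfl, ⟨hw', Or.inr h⟩⟩)

theorem rpl_block {τ : Matching M W} (hst : IsStable C τ) {x : M} {y : W}
    (hm : C.mPref x y (τ.μm x)) (hw : C.wPref y x (τ.μw y)) : False :=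
  hst.2 x y ⟨rpl_mPref_ne hm, hm, hw⟩

theorem rpl_pointwise {ξ ζ : Matching M W} (hξ : IsStable C ξ) (hζ : IsStable C ζ)
    {x : M} {w : W} (hzx : ζ.μm x = some w) (hpref : C.mPref x w (ξ.μm x)) :
    ∃ p, ξ.μw w = some p ∧ p ≠ x ∧ p ∈ C.wpref w ∧ x ∈ C.wpref w ∧
      (C.wpref w).idxOf p < (C.wpref w).idxOf x := by
  have hxw : x ∈ C.wpref w := (hζ.1 x w hzx).2
  cases hξw : ξ.μw w with
  | none =>
    exact absurd (rpl_block hξ hpref (by rw [hξw]; exact hxw)) (by simp)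
  | some p =>
    have hpμ : ξ.μm p = some w := (ξ.consistent p w).mpr hξw
    have hpw : p ∈ C.wpref w := (hξ.1 p w hpμ).2
    have hpx : p ≠ x := by
      rintro rfl
      exact rpl_mPref_ne hpref hpμ
    have hlt : (C.wpref w).idxOf p < (C.wpref w).idxOf x := by
      rcases rpl_idx_lt_or_lt hpw hxw hpx with h | h
      · exact h
      · exact absurd (rpl_block hξ hpref (by rw [hξw]; exact ⟨hxw, Or.inr h⟩)) (by simp)
    exact ⟨p, rfl, hpx, hpw, hxw, hlt⟩

theorem rpl_bclosure {μ ζ : Matching M W} (hμ : IsStable C μ) (hζ : IsStable C ζ)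
    {x : M} {w : W} (hzx : ζ.μm x = some w) (hpref : C.mPref x w (μ.μm x)) :
    ∃ p, μ.μw w = some p ∧ p ≠ x ∧ C.wPref w p (ζ.μw w) ∧
      ∃ w', ζ.μm p = some w' ∧ C.mPref p w' (μ.μm p) := by
  obtain ⟨p, hpw, hpx, hpmem, hxmem, hlt⟩ := rpl_pointwise hμ hζ hzx hpref
  have hζw : ζ.μw w = some x := (ζ.consistent x w).mp hzx
  have hwPp : C.wPref w p (ζ.μw w) := by rw [hζw]; exact ⟨hpmem, Or.inr hlt⟩
  have hμp : μ.μm p = some w := (μ.consistent p w).mpr hpw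
  have hwmem_p : w ∈ C.mpref p := (hμ.1 p w hμp).1
  rcases rpl_mTotal hwmem_p (ζ.μm p) (fun w' h => (hζ.1 p w' h).1) with hc | hc | ⟨w', hw', hc⟩
  · exact absurd (rpl_block hζ hc hwPp) (by simp)
  · exfalso
    have := (ζ.consistent p w).mp hc
    rw [hζw] at this
    exact hpx (Option.some.inj this).symm
  · exact ⟨p, hpw, hpx, hwPp, w', hw', by rw [hμp]; exact hc⟩

theorem rpl_fsurj [Fintype M] {μ ζ : Matching M W} (hμ : IsStable C μ) (hζ : IsStable C ζ)
    {p : M} {w : W} (hpw : μ.μw w = some p)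
    (hp : ∃ w', ζ.μm p = some w' ∧ C.mPref p w' (μ.μm p)) :
    ∃ z, ζ.μw w = some z ∧ ∃ w'', ζ.μm z = some w'' ∧ C.mPref z w'' (μ.μm z) := by
  classical
  set B : Set M := {x | ∃ w', ζ.μm x = some w' ∧ C.mPref x w' (μ.μm x)} with hB
  have hmkF : ∀ x : B, ∃ p' : B, μ.μw (Classical.choose x.2) = some (p' : M) := by
    intro x
    obtain ⟨hzx, hpref⟩ := Classical.choose_spec x.2
    obtain ⟨p', h1, _, _, hBp'⟩ := rpl_bclosure hμ hζ hzx hpref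
    exact ⟨⟨p', hBp'⟩, h1⟩
  let F : B → B := fun x => Classical.choose (hmkF x)
  have hFspec : ∀ x : B, μ.μw (Classical.choose x.2) = some ((F x) : M) := fun x =>
    Classical.choose_spec (hmkF x)
  have hFinj : Function.Injective F := by
    intro x1 x2 he
    have h1 := hFspec x1
    have h2 := hFspec x2
    rw [he] at h1
    have hw1 : μ.μm ((F x2) : M) = some (Classical.choose x1.2) := (μ.consistent _ _).mpr h1
    have hw2 : μ.μm ((F x2) : M) = some (Classical.choose x2.2) := (μ.consistent _ _).mpr h2
    have hww : Classical.choose x1.2 = Classical.choose x2.2 := by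
      rw [hw1] at hw2; exact Option.some.inj hw2
    have hz1 : ζ.μm (x1 : M) = some (Classical.choose x1.2) := (Classical.choose_spec x1.2).1
    have hz2 : ζ.μm (x2 : M) = some (Classical.choose x2.2) := (Classical.choose_spec x2.2).1
    have := (ζ.consistent _ _).mp hz1
    rw [hww] at this
    have := ((ζ.consistent _ _).mp hz2).symm.trans this
    exact Subtype.ext (Option.some.inj this).symm
  have : Finite B := Subtype.finite
  have hFsurj : Function.Surjective F := Finite.injective_iff_surjective.mp hFinj
  obtain ⟨z, hz⟩ := hFsurj ⟨p, hp⟩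
  have h1 := hFspec z
  rw [hz] at h1
  have hμm : μ.μm p = some (Classical.choose z.2) := (μ.consistent _ _).mpr h1
  have hμm' : μ.μm p = some w := (μ.consistent p w).mpr hpw
  have hww : Classical.choose z.2 = w := by rw [hμm] at hμm'; exact Option.some.inj hμm'
  have hz1 : ζ.μm (z : M) = some (Classical.choose z.2) := (Classical.choose_spec z.2).1
  rw [hww] at hz1
  exact ⟨(z : M), (ζ.consistent _ _).mp hz1, z.2⟩

end Chunk2

section Chunk3
variable {M W : Type*} [DecidableEq M] [DecidableEq W]
variable {A : SMInstance M W} {μ : Matching M W}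

theorem rpl_proposedToB_iff {m : M} {w : W} :
    proposedToB A μ m w = true ↔
      (w ∈ A.mpref m ∧ ∀ w', μ.μm m = some w' →
        (A.mpref m).idxOf w ≤ (A.mpref m).idxOf w') := by
  unfold proposedToB
  cases h : μ.μm m <;> simp [h]

theorem rpl_mem_pro {m : M} {w : W} :
    m ∈ proposals A μ w ↔ m ∈ A.wpref w ∧ proposedToB A μ m w = true := by
  unfold proposals
  exact List.mem_filter

theorem rpl_pro_nil (hA : IsStable A μ) {u : W} (hu : μ.μw u = none) :
    proposals A μ u = [] := by
  unfold proposals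
  rw [List.filter_eq_nil_iff]
  intro m hm
  simp only [Bool.not_eq_true]
  by_contra hb
  have hb' : proposedToB A μ m u = true := by simpa using hb
  obtain ⟨hmem, hle⟩ := rpl_proposedToB_iff.mp hb'
  have hmP : A.mPref m u (μ.μm m) := by
    cases hμm : μ.μm m with
    | none => exact hmem
    | some w' =>
      have hne : u ≠ w' := by
        rintro rfl
        have := (μ.consistent m u).mp hμm
        rw [hu] at this; exact nomatch this
      have hw' : w' ∈ A.mpref m := (hA.1 m w' hμm).1
      have := hle w' hμm
      refine ⟨hmem, Or.inr ?_⟩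
      rcases Nat.lt_or_ge ((A.mpref m).idxOf u) ((A.mpref m).idxOf w') with h | h
      · exact h
      · exact absurd ((List.idxOf_inj hmem).mp (Nat.le_antisymm this h)) hne
  exact rpl_block hA hmP (by rw [hu]; exact hm)

theorem rpl_pro_head (hA : IsStable A μ) {u : W} {p : M} (hup : μ.μw u = some p) :
    ∃ t, proposals A μ u = p :: t := by
  have hμp : μ.μm p = some u := (μ.consistent p u).mpr hup
  have hpmem : p ∈ A.wpref u := (hA.1 p u hμp).2
  have hpf : proposedToB A μ p u = true := by
    rw [rpl_proposedToB_iff]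
    refine ⟨(hA.1 p u hμp).1, ?_⟩
    intro w' hw'
    rw [hμp] at hw'
    rw [Option.some.inj hw']
  refine rpl_filtHead (A.wpref u) _ (A.wnodup u) hpmem hpf ?_
  intro y hy hfy hyp
  obtain ⟨hymem, hyle⟩ := rpl_proposedToB_iff.mp hfy
  have hmP : A.mPref y u (μ.μm y) := by
    cases hμy : μ.μm y with
    | none => exact hymem
    | some w' =>
      have hne : u ≠ w' := by
        rintro rfl
        exact hyp (Option.some.inj (((μ.consistent y u).mp hμy).symm.trans hup)).symm.symm
      have hw' : w' ∈ A.mpref y := (hA.1 y w' hμy).1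
      have := hyle w' hμy
      refine ⟨hymem, Or.inr ?_⟩
      rcases Nat.lt_or_ge ((A.mpref y).idxOf u) ((A.mpref y).idxOf w') with h | h
      · exact h
      · exact absurd ((List.idxOf_inj hymem).mp (Nat.le_antisymm this h)) hne
  rcases rpl_idx_lt_or_lt hpmem hy (fun h => hyp h.symm) with h | h
  · exact h
  · exact absurd (rpl_block hA hmP (by rw [hup]; exact ⟨hy, Or.inr h⟩)) (fun h => h)

theorem rpl_mPref_transfer {C : SMInstance M W} (hmp : C.mpref = A.mpref)
    {x : M} {y : W} {o : Option W} : C.mPref x y o ↔ A.mPref x y o := by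
  cases o <;> simp [SMInstance.mPref, hmp]

theorem rpl_wPref_transfer {C : SMInstance M W} {w : W} (hw : C.wpref w = A.wpref w)
    {m : M} {o : Option M} : C.wPref w m o ↔ A.wPref w m o := by
  cases o <;> simp [SMInstance.wPref, hw]

theorem rpl_stabC {C : SMInstance M W} {L : Set W}
    (hA : IsStable A μ)
    (hmp : C.mpref = A.mpref)
    (hw_eq : ∀ w ∉ L, C.wpref w = A.wpref w)
    (hw_perm : ∀ w ∈ L, (C.wpref w).Perm (A.wpref w))
    (hw_pre : ∀ w ∈ L, ((proposals A μ w).take 2) <+: C.wpref w) :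
    IsStable C μ := by
  constructor
  · intro m w hmw
    obtain ⟨h1, h2⟩ := hA.1 m w hmw
    refine ⟨by rw [hmp]; exact h1, ?_⟩
    by_cases hL : w ∈ L
    · exact ((hw_perm w hL).mem_iff).mpr h2
    · rw [hw_eq w hL]; exact h2
  · rintro m w ⟨hne, hmP, hwP⟩
    by_cases hL : w ∈ L
    · cases hμw : μ.μw w with
      | none =>
        have hpro : proposals A μ w = [] := rpl_pro_nil hA hμw
        have hmem : m ∈ proposals A μ w := by
          rw [rpl_mem_pro]
          constructor
          · exact ((hw_perm w hL).mem_iff).mp (rpl_wPref_mem hwP)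
          · rw [rpl_proposedToB_iff]
            have hmP' : A.mPref m w (μ.μm m) := (rpl_mPref_transfer hmp).mp hmP
            refine ⟨rpl_mPref_mem hmP', ?_⟩
            intro w' hw'
            rw [hw'] at hmP'
            exact Nat.le_of_lt (rpl_mPref_lt hmP' (hA.1 m w' hw').1)
        rw [hpro] at hmem
        exact absurd hmem List.not_mem_nil
      | some p =>
        obtain ⟨t, hpro⟩ := rpl_pro_head hA hμw
        obtain ⟨rest, hrest⟩ := hw_pre w hL
        rw [hpro] at hrest
        have hCw : ∃ l', C.wpref w = p :: l' := by
          cases t with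
          | nil => exact ⟨rest, by simpa using hrest.symm⟩
          | cons s t' => exact ⟨s :: rest, by simpa using hrest.symm⟩
        obtain ⟨l', hCw⟩ := hCw
        rw [hμw] at hwP
        have hlt := rpl_wPref_lt hwP (by rw [hCw]; exact List.mem_cons_self)
        rw [hCw, List.idxOf_cons_self] at hlt
        exact Nat.not_lt_zero _ hlt
    · have hmP' : A.mPref m w (μ.μm m) := (rpl_mPref_transfer hmp).mp hmP
      have hwP' : A.wPref w m (μ.μw w) := (rpl_wPref_transfer (hw_eq w hL)).mp hwP
      exact hA.2 m w ⟨hne, hmP', hwP'⟩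

end Chunk3

section Chunk4
variable {M W : Type*} [DecidableEq M] [DecidableEq W]

/-- auxiliary: woman `y` would weakly accept man `x` given matching `σ`. -/
def rplCond (C : SMInstance M W) (σ : Matching M W) (x : M) (y : W) : Prop :=
  x ∈ C.wpref y ∧ (σ.μw y = some x ∨ C.wPref y x (σ.μw y))

open Classical in
/-- auxiliary: the reduced preference list of man `x` at stable matching `σ`. -/
noncomputable def rplRed (C : SMInstance M W) (σ : Matching M W) (x : M) : List W :=
  (C.mpref x).filter (fun y => decide (rplCond C σ x y))

variable {C : SMInstance M W} {μ σ : Matching M W}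

theorem rpl_mem_Red {x : M} {y : W} :
    y ∈ rplRed C σ x ↔ y ∈ C.mpref x ∧ rplCond C σ x y := by
  unfold rplRed
  rw [List.mem_filter]
  simp

theorem rpl_Red_head (hσ : IsStable C σ) {x : M} {w : W} (hxw : σ.μm x = some w) :
    ∃ t, rplRed C σ x = w :: t := by
  classical
  have hwmem : w ∈ C.mpref x := (hσ.1 x w hxw).1
  have hcond : rplCond C σ x w := ⟨(hσ.1 x w hxw).2, Or.inl ((σ.consistent x w).mp hxw)⟩
  refine rpl_filtHead (C.mpref x) _ (C.mnodup x) hwmem (by simp [hcond]) ?_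
  intro y hy hfy hyw
  have hcy : rplCond C σ x y := by simpa using hfy
  rcases rpl_idx_lt_or_lt hwmem hy (fun h => hyw h.symm) with h | h
  · exact h
  · exfalso
    have hmP : C.mPref x y (σ.μm x) := by rw [hxw]; exact ⟨hy, Or.inr h⟩
    have hwPy : C.wPref y x (σ.μw y) := by
      rcases hcy.2 with h' | h'
      · exfalso
        have : σ.μm x = some y := (σ.consistent x y).mpr h'
        rw [hxw] at this
        exact hyw (Option.some.inj this).symm
      · exact h'
    exact rpl_block hσ hmP hwPy

theorem rpl_bmatched [Fintype M] {ζ : Matching M W} (hμ : IsStable C μ) (hζ : IsStable C ζ)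
    {x : M} (hx : ∃ w', ζ.μm x = some w' ∧ C.mPref x w' (μ.μm x)) :
    ∃ w0, μ.μm x = some w0 := by
  classical
  set B : Set M := {z | ∃ w', ζ.μm z = some w' ∧ C.mPref z w' (μ.μm z)} with hB
  have hmkF : ∀ z : B, ∃ p' : B, μ.μw (Classical.choose z.2) = some (p' : M) := by
    intro z
    obtain ⟨hzx, hpref⟩ := Classical.choose_spec z.2
    obtain ⟨p', h1, _, _, hBp'⟩ := rpl_bclosure hμ hζ hzx hpref
    exact ⟨⟨p', hBp'⟩, h1⟩
  let F : B → B := fun z => Classical.choose (hmkF z)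
  have hFspec : ∀ z : B, μ.μw (Classical.choose z.2) = some ((F z) : M) := fun z =>
    Classical.choose_spec (hmkF z)
  have hFinj : Function.Injective F := by
    intro x1 x2 he
    have h1 := hFspec x1
    have h2 := hFspec x2
    rw [he] at h1
    have hw1 : μ.μm ((F x2) : M) = some (Classical.choose x1.2) := (μ.consistent _ _).mpr h1
    have hw2 : μ.μm ((F x2) : M) = some (Classical.choose x2.2) := (μ.consistent _ _).mpr h2
    have hww : Classical.choose x1.2 = Classical.choose x2.2 := by
      rw [hw1] at hw2; exact Option.some.inj hw2
    have hz1 : ζ.μm (x1 : M) = some (Classical.choose x1.2) := (Classical.choose_spec x1.2).1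
    have hz2 : ζ.μm (x2 : M) = some (Classical.choose x2.2) := (Classical.choose_spec x2.2).1
    have h3 := (ζ.consistent _ _).mp hz1
    rw [hww] at h3
    have h4 := ((ζ.consistent _ _).mp hz2).symm.trans h3
    exact Subtype.ext (Option.some.inj h4).symm
  have : Finite B := Subtype.finite
  have hFsurj : Function.Surjective F := Finite.injective_iff_surjective.mp hFinj
  obtain ⟨z, hz⟩ := hFsurj ⟨x, hx⟩
  have h1 := hFspec z
  rw [hz] at h1
  exact ⟨Classical.choose z.2, (μ.consistent _ _).mpr h1⟩

theorem rpl_step [Fintype M] (hμ : IsStable C μ) (hσ : IsStable C σ)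
    (hdich : ∀ z, σ.μm z = μ.μm z ∨ ∃ w', σ.μm z = some w' ∧ C.mPref z w' (μ.μm z))
    {x : M} (hx : ∃ w', σ.μm x = some w' ∧ C.mPref x w' (μ.μm x)) :
    ∃ (w s : W) (t : List W) (m₂ : M) (w0 : W),
      σ.μm x = some w ∧ rplRed C σ x = w :: s :: t ∧ w ≠ s ∧
      σ.μw s = some m₂ ∧ m₂ ≠ x ∧
      (∃ w'', σ.μm m₂ = some w'' ∧ C.mPref m₂ w'' (μ.μm m₂)) ∧
      μ.μm x = some w0 ∧ (C.mpref x).idxOf s ≤ (C.mpref x).idxOf w0 := by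
  classical
  obtain ⟨w, hσx, hpref⟩ := hx
  obtain ⟨w0, hw0⟩ := rpl_bmatched hμ hσ ⟨w, hσx, hpref⟩
  have hprefw0 : C.mPref x w (some w0) := by rw [← hw0]; exact hpref
  have hww0 : w ≠ w0 := fun h => rpl_mPref_ne hpref (h ▸ hw0)
  have hxw0mem : x ∈ C.wpref w0 := (hμ.1 x w0 hw0).2
  have hμww0 : μ.μw w0 = some x := (μ.consistent x w0).mp hw0
  have hcondw0 : rplCond C σ x w0 := by
    refine ⟨hxw0mem, ?_⟩
    cases hσw0 : σ.μw w0 with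
    | none => exact Or.inr hxw0mem
    | some q' =>
      by_cases hq' : q' = x
      · exact Or.inl (by rw [hq'])
      · refine Or.inr ?_
        have hσq' : σ.μm q' = some w0 := (σ.consistent q' w0).mpr hσw0
        rcases hdich q' with heq | ⟨w'', hq'2, hq'3⟩
        · exfalso
          rw [heq] at hσq'
          have := (μ.consistent q' w0).mp hσq'
          rw [hμww0] at this
          exact hq' (Option.some.inj this).symm
        · have hw'' : w'' = w0 := by rw [hq'2] at hσq'; exact Option.some.inj hσq'
          subst hw''
          obtain ⟨p, hp1, _, _, _, hplt⟩ := rpl_pointwise hμ hσ hq'2 hq'3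
          have hpx : p = x := Option.some.inj (hp1.symm.trans hμww0)
          subst hpx
          exact ⟨hxw0mem, Or.inr hplt⟩
  have hw0Red : w0 ∈ rplRed C σ x := rpl_mem_Red.mpr ⟨(hμ.1 x w0 hw0).1, hcondw0⟩
  obtain ⟨t₁, hRed⟩ := rpl_Red_head hσ hσx
  have hw0t : w0 ∈ t₁ := by
    rw [hRed] at hw0Red
    rcases List.mem_cons.mp hw0Red with h | h
    · exact absurd h.symm hww0
    · exact h
  obtain ⟨s, t, rfl⟩ : ∃ s t, t₁ = s :: t := by
    cases t₁ with
    | nil => exact absurd hw0t List.not_mem_nil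
    | cons s t => exact ⟨s, t, rfl⟩
  have hRednd : (w :: s :: t).Nodup := by
    rw [← hRed]
    exact List.filter_sublist.nodup (C.mnodup x)
  have hws : w ≠ s := by
    intro h
    have := hRednd
    rw [h] at this
    simp at this
  have hsmem : s ∈ rplRed C σ x := by rw [hRed]; exact List.mem_cons_of_mem _ (List.mem_cons_self)
  obtain ⟨hsmp, hconds⟩ := rpl_mem_Red.mp hsmem
  have hsle : (C.mpref x).idxOf s ≤ (C.mpref x).idxOf w0 := by
    refine rpl_filtSecond (C.mpref x) _ hRed w0 (hμ.1 x w0 hw0).1 (by simp [hcondw0]) (Ne.symm hww0)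
  by_cases hsw0 : s = w0
  · subst hsw0
    obtain ⟨m₂, hm₂, hPBm₂⟩ := rpl_fsurj hμ hσ hμww0 ⟨w, hσx, hpref⟩
    have hm₂x : m₂ ≠ x := by
      rintro rfl
      have : σ.μm m₂ = some s := (σ.consistent m₂ s).mpr hm₂
      rw [hσx] at this
      exact hws (Option.some.inj this)
    exact ⟨w, s, t, m₂, s, hσx, hRed, hws, hm₂, hm₂x, hPBm₂, hw0, hsle⟩
  · have hslt : (C.mpref x).idxOf s < (C.mpref x).idxOf w0 := by
      rcases Nat.lt_or_ge ((C.mpref x).idxOf s) ((C.mpref x).idxOf w0) with h | h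
      · exact h
      · exact absurd ((List.idxOf_inj hsmp).mp (Nat.le_antisymm hsle h)) hsw0
    have hmPxs : C.mPref x s (μ.μm x) := by rw [hw0]; exact ⟨hsmp, Or.inr hslt⟩
    cases hμs : μ.μw s with
    | none =>
      exact absurd (rpl_block hμ hmPxs (by rw [hμs]; exact hconds.1)) (fun h => h)
    | some z0 =>
      have hz0x : z0 ≠ x := by
        rintro rfl
        have : μ.μm z0 = some s := (μ.consistent z0 s).mpr hμs
        rw [hw0] at this
        exact hsw0 (Option.some.inj this).symm
      have hμz0 : μ.μm z0 = some s := (μ.consistent z0 s).mpr hμs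
      have hz0mem : z0 ∈ C.wpref s := (hμ.1 z0 s hμz0).2
      have hPBz0 : ∃ w'', σ.μm z0 = some w'' ∧ C.mPref z0 w'' (μ.μm z0) := by
        rcases hdich z0 with heq | h
        · exfalso
          have hσz0 : σ.μm z0 = some s := by rw [heq]; exact hμz0
          have hσws : σ.μw s = some z0 := (σ.consistent z0 s).mp hσz0
          have hxlt : (C.wpref s).idxOf x < (C.wpref s).idxOf z0 := by
            rcases hconds.2 with h' | h'
            · rw [hσws] at h'; exact absurd (Option.some.inj h') hz0x
            · rw [hσws] at h'
              exact rpl_wPref_lt h' hz0mem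
          have hblk : C.wPref s x (μ.μw s) := by rw [hμs]; exact ⟨hconds.1, Or.inr hxlt⟩
          exact rpl_block hμ hmPxs hblk
        · exact h
      obtain ⟨m₂, hm₂, hPBm₂⟩ := rpl_fsurj hμ hσ hμs hPBz0
      have hm₂x : m₂ ≠ x := by
        rintro rfl
        have : σ.μm m₂ = some s := (σ.consistent m₂ s).mpr hm₂
        rw [hσx] at this
        exact hws (Option.some.inj this)
      exact ⟨w, s, t, m₂, w0, hσx, hRed, hws, hm₂, hm₂x, hPBm₂, hw0, hsle⟩

end Chunk4

section Chunk5
variable {M W : Type*} [DecidableEq M] [DecidableEq W]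
variable {C : SMInstance M W} {μ ζ : Matching M W}

theorem rpl_join [Fintype M] (hμ : IsStable C μ) (hζ : IsStable C ζ)
    {x₀ : M} (hx₀ : ∃ w', ζ.μm x₀ = some w' ∧ C.mPref x₀ w' (μ.μm x₀)) :
    ∃ lam : Matching M W, IsStable C lam ∧
      (∀ z, lam.μm z = μ.μm z ∨ ∃ w', lam.μm z = some w' ∧ C.mPref z w' (μ.μm z)) ∧
      lam.μm ≠ μ.μm := by
  classical
  set P : M → Prop := fun x => ∃ w', ζ.μm x = some w' ∧ C.mPref x w' (μ.μm x) with hP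
  set lm : M → Option W := fun x => if P x then ζ.μm x else μ.μm x with hlm
  have hlm_pos : ∀ {x}, P x → lm x = ζ.μm x := by intro x hx; simp only [hlm, if_pos hx]
  have hlm_neg : ∀ {x}, ¬ P x → lm x = μ.μm x := by intro x hx; simp only [hlm, if_neg hx]
  have hmix : ∀ (m₁ m₂ : M) (w : W), P m₁ → ¬ P m₂ → ζ.μm m₁ = some w →
      μ.μm m₂ = some w → m₁ = m₂ := by
    intro m₁ m₂ w p1 p2 h1 h2
    obtain ⟨w', hw', hpref⟩ := p1
    have hww : w = w' := by rw [hw'] at h1; exact (Option.some.inj h1).symm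
    subst hww
    obtain ⟨p, hp1, hp2, hp3, hp4, hp5⟩ := rpl_pointwise hμ hζ hw' hpref
    have hμw : μ.μw w = some m₂ := (μ.consistent _ _).mp h2
    have hpm₂ : m₂ = p := (Option.some.inj (hp1.symm.trans hμw)).symm
    subst hpm₂
    by_cases hζ2 : ζ.μm m₂ = some w
    · exact Option.some.inj (((ζ.consistent _ _).mp hw').symm.trans ((ζ.consistent _ _).mp hζ2))
    · exfalso
      have hwmem : w ∈ C.mpref m₂ := (hμ.1 m₂ w h2).1
      rcases rpl_mTotal hwmem (ζ.μm m₂) (fun w'' h => (hζ.1 m₂ w'' h).1) with hc | hc | ⟨w'', hc1, hc2⟩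
      · obtain ⟨p', hq1, hq2, hq3, hq4, hq5⟩ := rpl_pointwise hζ hμ h2 hc
        have hζw : ζ.μw w = some m₁ := (ζ.consistent _ _).mp hw'
        have : p' = m₁ := Option.some.inj (hq1.symm.trans hζw)
        subst this
        omega
      · exact hζ2 hc
      · exact p2 ⟨w'', hc1, by rw [h2]; exact hc2⟩
  have huniq : ∀ {m₁ m₂ : M} {w : W}, lm m₁ = some w → lm m₂ = some w → m₁ = m₂ := by
    intro m₁ m₂ w h1 h2
    by_cases p1 : P m₁ <;> by_cases p2 : P m₂
    · rw [hlm_pos p1] at h1; rw [hlm_pos p2] at h2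
      exact Option.some.inj (((ζ.consistent _ _).mp h1).symm.trans ((ζ.consistent _ _).mp h2))
    · rw [hlm_pos p1] at h1; rw [hlm_neg p2] at h2
      exact hmix m₁ m₂ w p1 p2 h1 h2
    · rw [hlm_neg p1] at h1; rw [hlm_pos p2] at h2
      exact (hmix m₂ m₁ w p2 p1 h2 h1).symm
    · rw [hlm_neg p1] at h1; rw [hlm_neg p2] at h2
      exact Option.some.inj (((μ.consistent _ _).mp h1).symm.trans ((μ.consistent _ _).mp h2))
  set lw : W → Option M := fun w => if h : ∃ m, lm m = some w then some (Classical.choose h) else none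
    with hlw
  have hcons : ∀ (m : M) (w : W), lm m = some w ↔ lw w = some m := by
    intro m w
    constructor
    · intro h
      have hex : ∃ m', lm m' = some w := ⟨m, h⟩
      have hch : lm (Classical.choose hex) = some w := Classical.choose_spec hex
      have : Classical.choose hex = m := huniq hch h
      rw [hlw]
      simp only [dif_pos hex, this]
    · intro h
      rw [hlw] at h
      simp only at h
      by_cases hex : ∃ m', lm m' = some w
      · rw [dif_pos hex] at h
        have := Classical.choose_spec hex
        rwa [Option.some.inj h] at this
      · rw [dif_neg hex] at h
        exact nomatch h
  set lam : Matching M W := ⟨lm, lw, hcons⟩ with hlam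
  have hlamm : lam.μm = lm := rfl
  refine ⟨lam, ⟨?_, ?_⟩, ?_, ?_⟩
  · -- individually rational
    intro m w hmw
    rw [hlamm] at hmw
    by_cases p : P m
    · rw [hlm_pos p] at hmw; exact hζ.1 m w hmw
    · rw [hlm_neg p] at hmw; exact hμ.1 m w hmw
  · -- no blocking pair
    rintro x y ⟨hne, hmP, hwP⟩
    rw [hlamm] at hmP
    -- strengthen x-side
    have hside : C.mPref x y (ζ.μm x) ∧ C.mPref x y (μ.μm x) := by
      by_cases p : P x
      · obtain ⟨w', hw', hpref⟩ := p
        have h1 : C.mPref x y (ζ.μm x) := by rwa [hlm_pos ⟨w', hw', hpref⟩] at hmP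
        refine ⟨h1, ?_⟩
        rw [hw'] at h1
        exact rpl_mPref_trans h1 hpref
      · have h2 : C.mPref x y (μ.μm x) := by rwa [hlm_neg p] at hmP
        refine ⟨?_, h2⟩
        have hymem : y ∈ C.mpref x := rpl_mPref_mem h2
        rcases rpl_mTotal hymem (ζ.μm x) (fun w'' h => (hζ.1 x w'' h).1) with hc | hc | ⟨w'', hc1, hc2⟩
        · exact hc
        · exact absurd ⟨y, hc, h2⟩ p
        · exact absurd ⟨w'', hc1, rpl_mPref_trans hc2 h2⟩ p
    -- y-side case analysis
    have hlwy : lam.μw y = lw y := rfl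
    rw [hlwy] at hwP
    by_cases hex : ∃ m', lm m' = some y
    · rw [hlw] at hwP
      simp only [dif_pos hex] at hwP
      set z := Classical.choose hex with hz
      have hzspec : lm z = some y := Classical.choose_spec hex
      by_cases pz : P z
      · have : ζ.μm z = some y := by rwa [hlm_pos pz] at hzspec
        exact rpl_block hζ hside.1 (by rw [(ζ.consistent z y).mp this]; exact hwP)
      · have : μ.μm z = some y := by rwa [hlm_neg pz] at hzspec
        exact rpl_block hμ hside.2 (by rw [(μ.consistent z y).mp this]; exact hwP)
    · rw [hlw] at hwP
      simp only [dif_neg hex] at hwP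
      have hymem : x ∈ C.wpref y := rpl_wPref_mem hwP
      cases hμy : μ.μw y with
      | none => exact rpl_block hμ hside.2 (by rw [hμy]; exact hymem)
      | some p' =>
        by_cases pp' : P p'
        · obtain ⟨z', hz1, hz2⟩ := rpl_fsurj hμ hζ hμy pp'
          have : lm z' = some y := by rw [hlm_pos hz2]; exact (ζ.consistent z' y).mpr hz1
          exact hex ⟨z', this⟩
        · have : lm p' = some y := by rw [hlm_neg pp']; exact (μ.consistent p' y).mpr hμy
          exact hex ⟨p', this⟩
  · -- dichotomy
    intro z
    by_cases p : P z
    · obtain ⟨w', hw', hpref⟩ := p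
      exact Or.inr ⟨w', by rw [hlamm, hlm_pos ⟨w', hw', hpref⟩]; exact hw', hpref⟩
    · exact Or.inl (by rw [hlamm, hlm_neg p])
  · -- lam.μm ≠ μ.μm
    intro hcontra
    obtain ⟨w', hw', hpref⟩ := hx₀
    have h1 : lm x₀ = some w' := by rw [hlm_pos ⟨w', hw', hpref⟩]; exact hw'
    have h2 : μ.μm x₀ = some w' := by rw [← congrFun hcontra x₀]; exact h1
    exact rpl_mPref_ne hpref h2

end Chunk5

section Chunk6
variable {M W : Type*} [DecidableEq M] [DecidableEq W]
variable {C : SMInstance M W} {μ σ : Matching M W}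

theorem rpl_elim [Fintype M] (hμ : IsStable C μ) (hσ : IsStable C σ)
    (hdich : ∀ z, σ.μm z = μ.μm z ∨ ∃ w', σ.μm z = some w' ∧ C.mPref z w' (μ.μm z))
    (hne : σ.μm ≠ μ.μm) :
    ∃ σ' : Matching M W, IsStable C σ' ∧
      (∀ z, σ'.μm z = μ.μm z ∨ ∃ w', σ'.μm z = some w' ∧ C.mPref z w' (μ.μm z)) ∧
      (∀ z, σ'.μm z = σ.μm z ∨ ∃ w s, σ.μm z = some w ∧ σ'.μm z = some s ∧ s ∈ C.mpref z ∧
          (C.mpref z).idxOf w < (C.mpref z).idxOf s) ∧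
      (∃ z w s, σ.μm z = some w ∧ σ'.μm z = some s ∧ s ∈ C.mpref z ∧
          (C.mpref z).idxOf w < (C.mpref z).idxOf s) ∧
      (σ'.μm = μ.μm →
        ∀ z, σ.μm z ≠ μ.μm z →
          ∃ w s t, σ.μm z = some w ∧ rplRed C σ z = w :: s :: t ∧ μ.μm z = some s) := by
  classical
  set PB : M → Prop := fun x => ∃ w', σ.μm x = some w' ∧ C.mPref x w' (μ.μm x) with hPBdef
  have hstep' : ∀ x, PB x → ∃ (w s : W) (t : List W) (m₂ : M) (w0 : W),
      σ.μm x = some w ∧ rplRed C σ x = w :: s :: t ∧ w ≠ s ∧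
      σ.μw s = some m₂ ∧ m₂ ≠ x ∧ PB m₂ ∧
      μ.μm x = some w0 ∧ (C.mpref x).idxOf s ≤ (C.mpref x).idxOf w0 :=
    fun x hx => rpl_step hμ hσ hdich hx
  obtain ⟨m₀, hm₀⟩ : ∃ x, σ.μm x ≠ μ.μm x := Function.ne_iff.mp hne
  have hPB0 : PB m₀ := (hdich m₀).resolve_left hm₀
  haveI : Nonempty W := ⟨Classical.choose hPB0⟩
  choose! wfn sfn tfn gfn w0fn hg1 hg2 hg3 hg4 hg5 hg6 hg7 hg8 using hstep'
  have hiter : ∀ k, PB (gfn^[k] m₀) := by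
    intro k
    induction k with
    | zero => exact hPB0
    | succ k ih => rw [Function.iterate_succ_apply']; exact hg6 _ ih
  have hnsl : ∀ x, PB x → gfn x ≠ x := hg5
  obtain ⟨a, b, hab, heq⟩ := Fintype.exists_ne_map_eq_of_card_lt
    (fun t : Fin (Fintype.card M + 1) => gfn^[(t : ℕ)] m₀) (by simp)
  have hkey : ∃ (i j : ℕ), i < j ∧ gfn^[i] m₀ = gfn^[j] m₀ := by
    rcases Nat.lt_or_ge (a : ℕ) (b : ℕ) with h | h
    · exact ⟨a, b, h, heq⟩
    · rcases Nat.lt_or_ge (b : ℕ) (a : ℕ) with h' | h'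
      · exact ⟨b, a, h', heq.symm⟩
      · exact absurd (Fin.ext (Nat.le_antisymm h' h)) hab
  obtain ⟨i, j, hij, hfeq⟩ := hkey
  obtain ⟨mstar, hmstar⟩ : ∃ m : M, m = gfn^[i] m₀ := ⟨_, rfl⟩
  have hmiter : ∀ t, gfn^[t] mstar = gfn^[t + i] m₀ := by
    intro t; rw [hmstar]; exact (Function.iterate_add_apply gfn t i m₀).symm
  have hmPB : PB mstar := by rw [hmstar]; exact hiter i
  have hper : ∃ k, 0 < k ∧ gfn^[k] mstar = mstar := by
    refine ⟨j - i, by omega, ?_⟩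
    rw [hmiter (j - i)]
    have hji : j - i + i = j := by omega
    rw [hji, ← hfeq, ← hmstar]
  set n : ℕ := Nat.find hper with hn
  have hnspec : 0 < n ∧ gfn^[n] mstar = mstar := Nat.find_spec hper
  have hnmin : ∀ k, k < n → ¬(0 < k ∧ gfn^[k] mstar = mstar) := fun k hk => Nat.find_min hper hk
  set CYC : Finset M := (Finset.range n).image (fun t => gfn^[t] mstar) with hCYCdef
  have hmemCYC : ∀ {x : M}, x ∈ CYC ↔ ∃ t, t < n ∧ gfn^[t] mstar = x := by
    intro x
    rw [hCYCdef]
    simp [Finset.mem_image, Finset.mem_range]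
  have hCYCPB : ∀ {x}, x ∈ CYC → PB x := by
    intro x hx
    obtain ⟨t, _, rfl⟩ := hmemCYC.mp hx
    rw [hmiter]; exact hiter _
  have hcancel : ∀ t1 t2, t1 ≤ t2 → t2 < n → gfn^[t1] mstar = gfn^[t2] mstar → t1 = t2 := by
    intro t1 t2 h12 h2n hfe
    by_contra hne'
    have h12' : t1 < t2 := by omega
    have hx : gfn^[n - t2] (gfn^[t1] mstar) = gfn^[n - t2] (gfn^[t2] mstar) := by rw [hfe]
    have e1 : gfn^[n - t2] (gfn^[t1] mstar) = gfn^[n - t2 + t1] mstar :=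
      (Function.iterate_add_apply gfn (n - t2) t1 mstar).symm
    have e2 : gfn^[n - t2] (gfn^[t2] mstar) = gfn^[n - t2 + t2] mstar :=
      (Function.iterate_add_apply gfn (n - t2) t2 mstar).symm
    have he2 : n - t2 + t2 = n := by omega
    rw [e1, e2, he2, hnspec.2] at hx
    exact hnmin (n - t2 + t1) (by omega) ⟨by omega, hx⟩
  have hmstarCYC : mstar ∈ CYC := hmemCYC.mpr ⟨0, hnspec.1, rfl⟩
  have hgmaps : ∀ {x}, x ∈ CYC → gfn x ∈ CYC := by
    intro x hx
    obtain ⟨t, htn, rfl⟩ := hmemCYC.mp hx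
    rcases Nat.lt_or_ge (t+1) n with h | h
    · exact hmemCYC.mpr ⟨t+1, h, by rw [Function.iterate_succ_apply']⟩
    · have ht1 : t + 1 = n := by omega
      refine hmemCYC.mpr ⟨0, hnspec.1, ?_⟩
      simp only [Function.iterate_zero, id_eq]
      rw [show gfn (gfn^[t] mstar) = gfn^[t + 1] mstar from
        (Function.iterate_succ_apply' gfn t mstar).symm, ht1, hnspec.2]
  have hkey2 : ∀ s1 s2, s1 ≤ s2 → s2 < n → gfn^[s1+1] mstar = gfn^[s2+1] mstar →
      gfn^[s1] mstar = gfn^[s2] mstar := by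
    intro s1 s2 hle hlt he
    rcases Nat.lt_or_ge (s2+1) n with h | h
    · have h12 : s1 + 1 = s2 + 1 := hcancel (s1+1) (s2+1) (by omega) h he
      have h13 : s1 = s2 := by omega
      rw [h13]
    · have hs2 : s2 + 1 = n := by omega
      have he' : gfn^[0] mstar = gfn^[s1+1] mstar := by
        simp only [Function.iterate_zero, id_eq]
        rw [he, hs2, hnspec.2]
      rcases Nat.lt_or_ge (s1+1) n with h' | h'
      · exact absurd (hcancel 0 (s1+1) (by omega) h' he') (by omega)
      · have h13 : s1 = s2 := by omega
        rw [h13]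
  have hginj : ∀ {x1 x2}, x1 ∈ CYC → x2 ∈ CYC → gfn x1 = gfn x2 → x1 = x2 := by
    intro x1 x2 h1 h2 hg
    obtain ⟨t1, ht1, rfl⟩ := hmemCYC.mp h1
    obtain ⟨t2, ht2, rfl⟩ := hmemCYC.mp h2
    rw [show gfn (gfn^[t1] mstar) = gfn^[t1 + 1] mstar from
      (Function.iterate_succ_apply' gfn t1 mstar).symm,
      show gfn (gfn^[t2] mstar) = gfn^[t2 + 1] mstar from
      (Function.iterate_succ_apply' gfn t2 mstar).symm] at hg
    rcases le_or_gt t1 t2 with h | h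
    · exact hkey2 t1 t2 h ht2 hg
    · exact (hkey2 t2 t1 (by omega) ht1 hg.symm).symm
  have hpred : ∀ {x}, x ∈ CYC → ∃ z, z ∈ CYC ∧ gfn z = x := by
    intro x hx
    obtain ⟨t, htn, rfl⟩ := hmemCYC.mp hx
    cases t with
    | zero =>
      refine ⟨gfn^[n-1] mstar, hmemCYC.mpr ⟨n-1, by omega, rfl⟩, ?_⟩
      have hn1 : n - 1 + 1 = n := by omega
      rw [show gfn (gfn^[n-1] mstar) = gfn^[n-1+1] mstar from
        (Function.iterate_succ_apply' gfn (n-1) mstar).symm, hn1, hnspec.2]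
      simp
    | succ t =>
      exact ⟨gfn^[t] mstar, hmemCYC.mpr ⟨t, by omega, rfl⟩,
        (Function.iterate_succ_apply' gfn t mstar).symm⟩
  have hsinj : ∀ {x1 x2}, x1 ∈ CYC → x2 ∈ CYC → sfn x1 = sfn x2 → x1 = x2 := by
    intro x1 x2 h1 h2 hs
    have e1 : σ.μw (sfn x1) = some (gfn x1) := hg4 _ (hCYCPB h1)
    have e2 : σ.μw (sfn x2) = some (gfn x2) := hg4 _ (hCYCPB h2)
    rw [hs] at e1
    exact hginj h1 h2 (Option.some.inj (e1.symm.trans e2))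
  set Q : W → Prop := fun y => ∃ x, x ∈ CYC ∧ sfn x = y with hQdef
  set sm : M → Option W := fun x => if x ∈ CYC then some (sfn x) else σ.μm x with hsm
  set sw : W → Option M := fun y => if h : Q y then some (Classical.choose h) else σ.μw y with hsw
  have hchoose : ∀ {y : W} (h : Q y), (Classical.choose h) ∈ CYC ∧ sfn (Classical.choose h) = y :=
    fun h => Classical.choose_spec h
  have hcons : ∀ m w, sm m = some w ↔ sw w = some m := by
    intro m w
    by_cases hm : m ∈ CYC
    · rw [hsm, hsw]
      simp only [if_pos hm]
      constructor
      · intro he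
        have hwm : sfn m = w := Option.some.inj he
        have hq : Q w := ⟨m, hm, hwm⟩
        simp only [dif_pos hq]
        obtain ⟨hc1, hc2⟩ := hchoose hq
        rw [hsinj hc1 hm (by rw [hc2, hwm])]
      · intro he
        by_cases hq : Q w
        · simp only [dif_pos hq] at he
          obtain ⟨hc1, hc2⟩ := hchoose hq
          rw [Option.some.inj he] at hc2
          rw [hc2]
        · simp only [dif_neg hq] at he
          exfalso
          have hσm : σ.μm m = some w := (σ.consistent m w).mpr he
          have hwfn : σ.μm m = some (wfn m) := hg1 m (hCYCPB hm)
          obtain ⟨z, hz1, hz2⟩ := hpred hm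
          have e1 : σ.μw (sfn z) = some (gfn z) := hg4 _ (hCYCPB hz1)
          rw [hz2] at e1
          have e2 : σ.μm m = some (sfn z) := (σ.consistent _ _).mpr e1
          rw [hσm] at e2
          exact hq ⟨z, hz1, (Option.some.inj e2).symm⟩
    · rw [hsm, hsw]
      simp only [if_neg hm]
      constructor
      · intro he
        by_cases hq : Q w
        · exfalso
          obtain ⟨hc1, hc2⟩ := hchoose hq
          have e1 : σ.μw (sfn (Classical.choose hq)) = some (gfn (Classical.choose hq)) :=
            hg4 _ (hCYCPB hc1)
          rw [hc2] at e1
          have e2 := (σ.consistent m w).mp he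
          rw [e1] at e2
          exact hm ((Option.some.inj e2) ▸ hgmaps hc1)
        · simp only [dif_neg hq]
          exact (σ.consistent m w).mp he
      · intro he
        by_cases hq : Q w
        · simp only [dif_pos hq] at he
          exact absurd ((Option.some.inj he) ▸ (hchoose hq).1) hm
        · simp only [dif_neg hq] at he
          exact (σ.consistent m w).mpr he
  set σ' : Matching M W := ⟨sm, sw, hcons⟩ with hσ'def
  have hσ'meq : ∀ x, σ'.μm x = sm x := fun _ => rfl
  have hσ'weq : ∀ y, σ'.μw y = sw y := fun _ => rfl
  have hsmemRed : ∀ {x}, x ∈ CYC → sfn x ∈ rplRed C σ x := by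
    intro x hx
    rw [hg2 x (hCYCPB hx)]
    exact List.mem_cons_of_mem _ (List.mem_cons_self)
  have hsmp : ∀ {x}, x ∈ CYC → sfn x ∈ C.mpref x := fun hx => (rpl_mem_Red.mp (hsmemRed hx)).1
  have hscond : ∀ {x}, x ∈ CYC → rplCond C σ x (sfn x) := fun hx => (rpl_mem_Red.mp (hsmemRed hx)).2
  have hcmp : ∀ {z}, z ∈ CYC → (C.mpref z).idxOf (wfn z) < (C.mpref z).idxOf (sfn z) := by
    intro z hz
    have hle := rpl_filtMin (C.mpref z) _ (hg2 z (hCYCPB hz)) (sfn z) (hsmp hz)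
      (by simp [hscond hz])
    have hne' := hg3 z (hCYCPB hz)
    have hwmem : wfn z ∈ C.mpref z := (hσ.1 z _ (hg1 z (hCYCPB hz))).1
    have hne2 : (C.mpref z).idxOf (wfn z) ≠ (C.mpref z).idxOf (sfn z) :=
      fun h => hne' ((List.idxOf_inj hwmem).mp h)
    omega
  refine ⟨σ', ⟨?_, ?_⟩, ?_, ?_, ?_, ?_⟩
  · -- IR
    intro m w hmw
    rw [hσ'meq, hsm] at hmw
    by_cases hm : m ∈ CYC
    · simp only [if_pos hm] at hmw
      have hwm : sfn m = w := Option.some.inj hmw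
      exact ⟨hwm ▸ hsmp hm, hwm ▸ (hscond hm).1⟩
    · simp only [if_neg hm] at hmw
      exact hσ.1 m w hmw
  · -- no blocking pair
    rintro x y ⟨hbne, hmP, hwP⟩
    rw [hσ'meq, hsm] at hmP
    rw [hσ'weq, hsw] at hwP
    have hxmemy : x ∈ C.wpref y := rpl_wPref_mem hwP
    by_cases hx : x ∈ CYC
    · simp only [if_pos hx] at hmP
      have hymem : y ∈ C.mpref x := rpl_mPref_mem hmP
      have hylt : (C.mpref x).idxOf y < (C.mpref x).idxOf (sfn x) :=
        rpl_mPref_lt hmP (hsmp hx)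
      by_cases hyw : y = wfn x
      · subst hyw
        obtain ⟨z, hz1, hz2⟩ := hpred hx
        have e1 : σ.μw (sfn z) = some (gfn z) := hg4 _ (hCYCPB hz1)
        have hσx : σ.μm x = some (wfn x) := hg1 x (hCYCPB hx)
        have hsz : sfn z = wfn x := by
          rw [hz2] at e1
          have e2 : σ.μm x = some (sfn z) := (σ.consistent _ _).mpr e1
          rw [hσx] at e2
          exact (Option.some.inj e2).symm
        have hq : Q (wfn x) := ⟨z, hz1, hsz⟩
        simp only [dif_pos hq] at hwP
        obtain ⟨hc1, hc2⟩ := hchoose hq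
        have hcz : Classical.choose hq = z := hsinj hc1 hz1 (by rw [hc2, hsz])
        rw [hcz] at hwP
        have hzmem : z ∈ C.wpref (wfn x) := hsz ▸ (hscond hz1).1
        have h1 : (C.wpref (wfn x)).idxOf x < (C.wpref (wfn x)).idxOf z :=
          rpl_wPref_lt hwP hzmem
        have e1' : σ.μw (sfn z) = some (gfn z) := hg4 _ (hCYCPB hz1)
        have hczz := (hscond hz1).2
        rcases hczz with h' | h'
        · rw [e1'] at h'
          exact hnsl z (hCYCPB hz1) (Option.some.inj h')
        · rw [e1', hz2] at h'
          have h2 : (C.wpref (sfn z)).idxOf z < (C.wpref (sfn z)).idxOf x :=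
            rpl_wPref_lt h' (hsz ▸ hxmemy)
          rw [hsz] at h2
          omega
      · have hynotRed : y ∉ rplRed C σ x := by
          intro hyRed
          have := rpl_filtSecond (C.mpref x) _ (hg2 x (hCYCPB hx)) y hymem
            (by simp [(rpl_mem_Red.mp hyRed).2]) hyw
          omega
        have hnd : ¬(σ.μw y = some x ∨ C.wPref y x (σ.μw y)) :=
          fun h => hynotRed (rpl_mem_Red.mpr ⟨hymem, hxmemy, h⟩)
        by_cases hq : Q y
        · simp only [dif_pos hq] at hwP
          obtain ⟨hc1, hc2⟩ := hchoose hq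
          generalize hzc : Classical.choose hq = zc at hwP hc1 hc2
          subst hc2
          have hzmem : zc ∈ C.wpref (sfn zc) := (hscond hc1).1
          have h1 := rpl_wPref_lt hwP hzmem
          have e1 : σ.μw (sfn zc) = some (gfn zc) := hg4 _ (hCYCPB hc1)
          have hczz := (hscond hc1).2
          rcases hczz with h' | h'
          · rw [e1] at h'
            exact hnsl _ (hCYCPB hc1) (Option.some.inj h')
          · rw [e1] at h'
            have hgmem : gfn zc ∈ C.wpref (sfn zc) :=
              (hσ.1 _ _ ((σ.consistent _ _).mpr e1)).2
            have h2 := rpl_wPref_lt h' hgmem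
            exact hnd (Or.inr (by rw [e1]; exact ⟨hxmemy, Or.inr (lt_trans h1 h2)⟩))
        · simp only [dif_neg hq] at hwP
          exact hnd (Or.inr hwP)
    · simp only [if_neg hx] at hmP
      by_cases hq : Q y
      · simp only [dif_pos hq] at hwP
        obtain ⟨hc1, hc2⟩ := hchoose hq
        generalize hzc : Classical.choose hq = zc at hwP hc1 hc2
        subst hc2
        have hzmem : zc ∈ C.wpref (sfn zc) := (hscond hc1).1
        have h1 := rpl_wPref_lt hwP hzmem
        have e1 : σ.μw (sfn zc) = some (gfn zc) := hg4 _ (hCYCPB hc1)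
        have hczz := (hscond hc1).2
        rcases hczz with h' | h'
        · rw [e1] at h'
          exact hnsl _ (hCYCPB hc1) (Option.some.inj h')
        · rw [e1] at h'
          have hgmem : gfn zc ∈ C.wpref (sfn zc) :=
            (hσ.1 _ _ ((σ.consistent _ _).mpr e1)).2
          have h2 := rpl_wPref_lt h' hgmem
          exact rpl_block hσ hmP (by rw [e1]; exact ⟨hxmemy, Or.inr (lt_trans h1 h2)⟩)
      · simp only [dif_neg hq] at hwP
        exact rpl_block hσ hmP hwP
  · -- dichotomy vs μ
    intro z
    rw [hσ'meq, hsm]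
    by_cases hz : z ∈ CYC
    · simp only [if_pos hz]
      have h7 := hg7 z (hCYCPB hz)
      have h8 := hg8 z (hCYCPB hz)
      by_cases hsw0 : sfn z = w0fn z
      · left; rw [hsw0, h7]
      · right
        refine ⟨sfn z, rfl, ?_⟩
        rw [h7]
        refine ⟨hsmp hz, Or.inr ?_⟩
        have hne2 : (C.mpref z).idxOf (sfn z) ≠ (C.mpref z).idxOf (w0fn z) :=
          fun h => hsw0 ((List.idxOf_inj (hsmp hz)).mp h)
        omega
    · simp only [if_neg hz]; exact hdich z
  · -- pointwise comparison with σ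
    intro z
    rw [hσ'meq, hsm]
    by_cases hz : z ∈ CYC
    · exact Or.inr ⟨wfn z, sfn z, hg1 z (hCYCPB hz), by simp only [if_pos hz], hsmp hz, hcmp hz⟩
    · exact Or.inl (by simp only [if_neg hz])
  · -- strict witness
    exact ⟨mstar, wfn mstar, sfn mstar, hg1 _ hmPB,
      by rw [hσ'meq, hsm]; simp only [if_pos hmstarCYC], hsmp hmstarCYC, hcmp hmstarCYC⟩
  · -- exposure
    intro hμeq z hzne
    have hz : z ∈ CYC := by
      by_contra hz
      have h1 : σ'.μm z = σ.μm z := by rw [hσ'meq, hsm]; simp only [if_neg hz]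
      rw [hμeq] at h1
      exact hzne h1.symm
    refine ⟨wfn z, sfn z, tfn z, hg1 z (hCYCPB hz), hg2 z (hCYCPB hz), ?_⟩
    have h1 : σ'.μm z = some (sfn z) := by rw [hσ'meq, hsm]; simp only [if_pos hz]
    rw [hμeq] at h1
    exact h1

end Chunk6

section Chunk7
variable {M W : Type*} [DecidableEq M] [DecidableEq W]

theorem rpl_Red_eq (C : SMInstance M W) (σ : Matching M W) (x : M) :
    rplRed C σ x = (C.mpref x).filter (fun y =>
      @decide (rplCond C σ x y) (Classical.propDecidable _)) := rfl

theorem rpl_pro_eq (A : SMInstance M W) (μ : Matching M W) (u : W) :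
    proposals A μ u = (A.wpref u).filter (fun m => proposedToB A μ m u) := rfl

theorem rpl_main [Fintype M] [Fintype W]
    (A C : SMInstance M W) (L : Set W) (μ : Matching M W)
    (hopt : IsMenOptimal A μ)
    (hmp : C.mpref = A.mpref)
    (hw_eq : ∀ w ∉ L, C.wpref w = A.wpref w)
    (hw_perm : ∀ w ∈ L, (C.wpref w).Perm (A.wpref w))
    (hw_pre : ∀ w ∈ L, ((proposals A μ w).take 2) <+: C.wpref w)
    (hstabC : IsStable C μ)
    (ζ : Matching M W) (hζ : IsStable C ζ) :
    ∀ x, ¬ ∃ w', ζ.μm x = some w' ∧ C.mPref x w' (μ.μm x) := by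
  intro x₀ hx₀
  classical
  obtain ⟨lam, hlamst, hlamdich, hlamne⟩ := rpl_join hstabC hζ hx₀
  set rnk : (M → Option W) → ℕ := fun f => ∑ m : M,
    (match f m with | some w => (C.mpref m).idxOf w | none => (C.mpref m).length) with hrnk
  set BND : ℕ := ∑ m : M, (C.mpref m).length with hBND
  set SP : Matching M W → Prop := fun τ => IsStable C τ ∧
    (∀ z, τ.μm z = μ.μm z ∨ ∃ w', τ.μm z = some w' ∧ C.mPref z w' (μ.μm z)) ∧ τ.μm ≠ μ.μm
    with hSP
  set QN : ℕ → Prop := fun k => ∃ τ, SP τ ∧ rnk τ.μm = k with hQN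
  have hrnkle : ∀ f : M → Option W, rnk f ≤ BND := by
    intro f
    rw [hrnk, hBND]
    refine Finset.sum_le_sum ?_
    intro m _
    cases hf : f m with
    | none => exact le_refl _
    | some w => exact List.idxOf_le_length
  have hQlam : QN (rnk lam.μm) := ⟨lam, ⟨hlamst, hlamdich, hlamne⟩, rfl⟩
  have hQNspec : QN (Nat.findGreatest QN BND) :=
    Nat.findGreatest_spec (hrnkle lam.μm) hQlam
  have hNmax : ∀ k, QN k → k ≤ Nat.findGreatest QN BND := by
    intro k hk
    refine Nat.le_findGreatest ?_ hk
    obtain ⟨τ, _, h⟩ := hk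
    rw [← h]
    exact hrnkle _
  obtain ⟨σ, ⟨hσst, hσdich, hσne⟩, hσrnk⟩ := hQNspec
  obtain ⟨σ', hσ'st, hσ'dich, hσ'cmp, ⟨zw, ww, sw', hzw1, hzw2, hzw3, hzw4⟩, hexpo⟩ :=
    rpl_elim hstabC hσst hσdich hσne
  have hσ'eq : σ'.μm = μ.μm := by
    by_contra hc
    have hQσ' : QN (rnk σ'.μm) := ⟨σ', ⟨hσ'st, hσ'dich, hc⟩, rfl⟩
    have hle := hNmax _ hQσ'
    have hstrict : rnk σ.μm < rnk σ'.μm := by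
      rw [hrnk]
      refine Finset.sum_lt_sum ?_ ⟨zw, Finset.mem_univ _, ?_⟩
      · intro m _
        rcases hσ'cmp m with h | ⟨w1, s1, h1, h2, h3, h4⟩
        · rw [h]
        · rw [h1, h2]
          exact Nat.le_of_lt h4
      · rw [hzw1, hzw2]
        exact hzw4
    omega
  have hexpo' := hexpo hσ'eq
  -- σ is not stable w.r.t. A
  obtain ⟨mz, hmz⟩ : ∃ z, σ.μm z ≠ μ.μm z := Function.ne_iff.mp hσne
  have hPBmz : ∃ w', σ.μm mz = some w' ∧ C.mPref mz w' (μ.μm mz) := (hσdich mz).resolve_left hmz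
  have hwmem : ∀ (w : W) (m : M), m ∈ C.wpref w ↔ m ∈ A.wpref w := by
    intro w m
    by_cases hLw : w ∈ L
    · exact (hw_perm w hLw).mem_iff
    · rw [hw_eq w hLw]
  have hnotA : ¬ IsStable A σ := by
    intro hA
    obtain ⟨w', hw'1, hw'2⟩ := hPBmz
    have hmw := hopt.2 σ hA mz
    rcases hmw with heq | ⟨w, hμw, hAp⟩
    · exact rpl_mPref_ne hw'2 (by rw [heq, hw'1])
    · have hApc : C.mPref mz w (σ.μm mz) := (rpl_mPref_transfer hmp).mpr hAp
      rw [hw'1] at hApc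
      rw [hμw] at hw'2
      have h1 := rpl_mPref_lt hApc (rpl_mPref_mem hw'2)
      have h2 := rpl_mPref_lt hw'2 (rpl_mPref_mem hApc)
      omega
  have hIRA : IndivRational A σ := by
    intro m w h
    have h1 := hσst.1 m w h
    refine ⟨?_, (hwmem w m).mp h1.2⟩
    have := h1.1
    rwa [hmp] at this
  obtain ⟨a, u, hbne, hmPA, hwPA⟩ : ∃ a u, BlockingPair A σ a u := by
    by_contra hno
    push_neg at hno
    exact hnotA ⟨hIRA, fun m w h => hno m w h⟩
  have hmPC : C.mPref a u (σ.μm a) := (rpl_mPref_transfer hmp).mpr hmPA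
  have hLu : u ∈ L := by
    by_contra hLu
    exact rpl_block hσst hmPC ((rpl_wPref_transfer (hw_eq u hLu)).mpr hwPA)
  have hmμ : C.mPref a u (μ.μm a) := by
    rcases hσdich a with h | ⟨w', h1, h2⟩
    · rw [← h]; exact hmPC
    · exact rpl_mPref_trans (h1 ▸ hmPC) h2
  have haw : a ∈ A.wpref u := rpl_wPref_mem hwPA
  have hawC : a ∈ C.wpref u := (hwmem u a).mpr haw
  obtain ⟨p, hμu⟩ : ∃ p, μ.μw u = some p := by
    cases hμu : μ.μw u with
    | some p => exact ⟨p, rfl⟩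
    | none => exact absurd (rpl_block hstabC hmμ (by rw [hμu]; exact hawC)) (fun h => h)
  have hμmp : μ.μm p = some u := (μ.consistent p u).mpr hμu
  obtain ⟨q, hσu⟩ : ∃ q, σ.μw u = some q := by
    cases hσu : σ.μw u with
    | some q => exact ⟨q, rfl⟩
    | none =>
      exfalso
      have hPBp : ∃ w', σ.μm p = some w' ∧ C.mPref p w' (μ.μm p) := by
        rcases hσdich p with h | h
        · exfalso
          rw [hμmp] at h
          have := (σ.consistent p u).mp h
          rw [hσu] at this
          exact nomatch this
        · exact h
      obtain ⟨z, hz, _⟩ := rpl_fsurj hstabC hσst hμu hPBp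
      rw [hσu] at hz
      exact nomatch hz
  have hσmq : σ.μm q = some u := (σ.consistent q u).mpr hσu
  have hmμA : A.mPref a u (μ.μm a) := (rpl_mPref_transfer hmp).mp hmμ
  have hμane : μ.μm a ≠ some u := rpl_mPref_ne hmμ
  have hpq : p ≠ q := by
    rintro rfl
    refine hopt.1.2 a u ⟨hμane, hmμA, ?_⟩
    rw [hσu] at hwPA
    rw [hμu]
    exact hwPA
  have hPBq : ∃ w', σ.μm q = some w' ∧ C.mPref q w' (μ.μm q) := by
    rcases hσdich q with h | h
    · exfalso
      rw [hσmq] at h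
      have := (μ.consistent q u).mp h.symm
      rw [hμu] at this
      exact hpq (Option.some.inj this)
    · exact h
  have hpmemA : p ∈ A.wpref u := (hopt.1.1 p u hμmp).2
  have hap : a ≠ p := by rintro rfl; exact hμane hμmp
  have h5 : (A.wpref u).idxOf p < (A.wpref u).idxOf a := by
    rcases rpl_idx_lt_or_lt hpmemA haw (fun h => hap h.symm) with h | h
    · exact h
    · exact absurd (hopt.1.2 a u ⟨hμane, hmμA, by rw [hμu]; exact ⟨haw, Or.inr h⟩⟩) (fun h => h)
  -- memberships in the proposal list
  obtain ⟨t1, hpro⟩ := rpl_pro_head hopt.1 hμu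
  have haProB : proposedToB A μ a u = true := by
    rw [rpl_proposedToB_iff]
    constructor
    · have := rpl_mPref_mem hmμ
      rwa [hmp] at this
    · intro w' hw'
      have hmμ' : C.mPref a u (some w') := hw' ▸ hmμ
      have h1 : (C.mpref a).idxOf u < (C.mpref a).idxOf w' :=
        rpl_mPref_lt hmμ' ((hstabC.1 a w' hw').1)
      rw [hmp] at h1
      exact Nat.le_of_lt h1
  have haPro : a ∈ proposals A μ u := rpl_mem_pro.mpr ⟨haw, haProB⟩
  have hquC : q ∈ C.wpref u := (hσst.1 q u hσmq).2
  have hqwA : q ∈ A.wpref u := (hwmem u q).mp hquC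
  have hqPro : q ∈ proposals A μ u := by
    refine rpl_mem_pro.mpr ⟨hqwA, rpl_proposedToB_iff.mpr ⟨?_, ?_⟩⟩
    · have := (hσst.1 q u hσmq).1
      rwa [hmp] at this
    · intro w' hw'
      obtain ⟨wq, hq1, hq2⟩ := hPBq
      have hwqu : wq = u := by rw [hq1] at hσmq; exact Option.some.inj hσmq
      subst hwqu
      have hq2' : C.mPref q wq (some w') := hw' ▸ hq2
      have h1 := rpl_mPref_lt hq2' ((hstabC.1 q w' hw').1)
      rw [hmp] at h1
      exact Nat.le_of_lt h1
  have haq : a ≠ q := by rintro rfl; exact hbne hσmq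
  have hqp : q ≠ p := fun h => hpq h.symm
  obtain ⟨s, t2, hpro2⟩ : ∃ s t2, proposals A μ u = p :: s :: t2 := by
    cases t1 with
    | nil =>
      exfalso
      rw [hpro] at hqPro
      rcases List.mem_cons.mp hqPro with h | h
      · exact hqp h
      · exact absurd h List.not_mem_nil
    | cons s t2 => exact ⟨s, t2, hpro⟩
  have hPronodup : (proposals A μ u).Nodup := List.filter_sublist.nodup (A.wnodup u)
  have hps : p ≠ s := by
    rw [hpro2] at hPronodup
    intro h
    rw [h] at hPronodup
    simp at hPronodup
  -- u-side ordering facts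
  rw [hσu] at hwPA
  have h8 : (A.wpref u).idxOf a < (A.wpref u).idxOf q := rpl_wPref_lt hwPA hqwA
  have hqs : q ≠ s := by
    rintro rfl
    have hf := rpl_filtSecond (A.wpref u) (fun m => proposedToB A μ m u) hpro2 a haw haProB hap
    omega
  -- the structure of u's list in C
  obtain ⟨rest, hCu⟩ : ∃ rest, C.wpref u = p :: s :: rest := by
    obtain ⟨r, hr⟩ := hw_pre u hLu
    rw [hpro2] at hr
    exact ⟨r, by rw [← hr]; rfl⟩
  have hidxs : (C.wpref u).idxOf s = 1 := by
    rw [hCu, List.idxOf_cons_ne _ hps, List.idxOf_cons_self]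
  have hsuC : s ∈ C.wpref u := by rw [hCu]; exact List.mem_cons_of_mem _ (List.mem_cons_self)
  have hidxq : 2 ≤ (C.wpref u).idxOf q := by
    rw [hCu, List.idxOf_cons_ne _ hpq, List.idxOf_cons_ne _ (fun h => hqs h.symm)]
    omega
  have hidxq' : (C.wpref u).idxOf s < (C.wpref u).idxOf q := by omega
  have has : a ≠ s := by
    rintro rfl
    have hlt : (C.wpref u).idxOf a < (C.wpref u).idxOf q := by omega
    exact rpl_block hσst hmPC (by rw [hσu]; exact ⟨hawC, Or.inr hlt⟩)
  -- analysis of s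
  have hsPro : s ∈ proposals A μ u := by
    rw [hpro2]
    exact List.mem_cons_of_mem _ (List.mem_cons_self)
  obtain ⟨hswA, hsB⟩ := rpl_mem_pro.mp hsPro
  obtain ⟨hsmpA, hsle⟩ := rpl_proposedToB_iff.mp hsB
  have hsmpC : u ∈ C.mpref s := by rw [hmp]; exact hsmpA
  have hnb : ¬ C.mPref s u (σ.μm s) := by
    intro hc
    exact rpl_block hσst hc (by rw [hσu]; exact ⟨hsuC, Or.inr hidxq'⟩)
  obtain ⟨y₂, hσs, hy₂lt⟩ :
      ∃ y₂, σ.μm s = some y₂ ∧ (C.mpref s).idxOf y₂ < (C.mpref s).idxOf u := by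
    cases hσs : σ.μm s with
    | none =>
      rw [hσs] at hnb
      exact absurd hsmpC hnb
    | some y₂ =>
      refine ⟨y₂, rfl, ?_⟩
      rw [hσs] at hnb
      have hy₂mem : y₂ ∈ C.mpref s := (hσst.1 s y₂ hσs).1
      have hne2 : y₂ ≠ u := by
        rintro rfl
        have := (σ.consistent s y₂).mp hσs
        rw [hσu] at this
        exact hqs (Option.some.inj this)
      rcases rpl_idx_lt_or_lt hy₂mem hsmpC hne2 with h | h
      · exact h
      · exact absurd ⟨hsmpC, Or.inr h⟩ hnb
  have hy₂mem : y₂ ∈ C.mpref s := (hσst.1 s y₂ hσs).1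
  have hPBs : ∃ w', σ.μm s = some w' ∧ C.mPref s w' (μ.μm s) := by
    refine ⟨y₂, hσs, ?_⟩
    cases hμs : μ.μm s with
    | none => exact hy₂mem
    | some w0s =>
      have hw0smem : w0s ∈ C.mpref s := (hstabC.1 s w0s hμs).1
      have hus : u ≠ w0s := by
        rintro rfl
        have := (μ.consistent s u).mp hμs
        rw [hμu] at this
        exact hps (Option.some.inj this)
      have hw0sA : w0s ∈ A.mpref s := by rw [← hmp]; exact hw0smem
      have hule := hsle w0s hμs
      have hne3 : (A.mpref s).idxOf u ≠ (A.mpref s).idxOf w0s :=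
        fun h => hus ((List.idxOf_inj hsmpA).mp h)
      have hultC : (C.mpref s).idxOf u < (C.mpref s).idxOf w0s := by
        rw [hmp]
        omega
      exact ⟨hy₂mem, Or.inr (lt_trans hy₂lt hultC)⟩
  have hsne : σ.μm s ≠ μ.μm s := by
    obtain ⟨w', h1, h2⟩ := hPBs
    rw [h1]
    intro h
    exact rpl_mPref_ne h2 h.symm
  obtain ⟨ws, ss, ts, hE1, hE2, hE3⟩ := hexpo' s hsne
  have hcondu : rplCond C σ s u := by
    refine ⟨hsuC, Or.inr ?_⟩
    rw [hσu]
    exact ⟨hsuC, Or.inr hidxq'⟩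
  have huws : u ≠ ws := by
    rintro rfl
    have : σ.μm s = some u := hE1
    have := (σ.consistent s u).mp this
    rw [hσu] at this
    exact hqs (Option.some.inj this)
  have hfs := rpl_filtSecond (C.mpref s)
    (fun y => @decide (rplCond C σ s y) (Classical.propDecidable _)) hE2 u hsmpC
    (by exact decide_eq_true hcondu) huws
  -- final contradiction
  have huss : u ≠ ss := by
    rintro rfl
    have := (μ.consistent s u).mp hE3
    rw [hμu] at this
    exact hps (Option.some.inj this)
  have hssA : ss ∈ A.mpref s := by
    rw [← hmp]
    exact (hstabC.1 s ss hE3).1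
  have hule2 := hsle ss hE3
  have hne4 : (A.mpref s).idxOf u ≠ (A.mpref s).idxOf ss :=
    fun h => huss ((List.idxOf_inj hsmpA).mp h)
  have hfsA : (A.mpref s).idxOf ss ≤ (A.mpref s).idxOf u := by
    rw [← hmp]
    exact hfs
  omega

end Chunk7

/-- moving the top two entries of each manipulator's received-proposal
list to the top of her reported list (and ordering the remaining men arbitrarily)
induces the same matching. -/
theorem reduced_proposal_list {M W : Type*} [DecidableEq M] [DecidableEq W]
    [Fintype M] [Fintype W] (I I' I'' : SMInstance M W) (L : Set W) (μ : Matching M W)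
    (hP : PermManip I I' L) (hopt : IsMenOptimal I' μ) (hstab : IsStable I μ)
    (hM : I''.mpref = I.mpref)
    (hN : ∀ w ∉ L, I''.wpref w = I.wpref w)
    (hL : ∀ w ∈ L, ((proposals I' μ w).take 2) <+: I''.wpref w ∧
          (I''.wpref w).Perm (I'.wpref w)) :
    IsMenOptimal I'' μ := by
  have hmp : I''.mpref = I'.mpref := by rw [hM, hP.1.1]
  have hw_eq : ∀ w ∉ L, I''.wpref w = I'.wpref w := by
    intro w hw
    rw [hN w hw, hP.1.2 w hw]
  have hw_perm : ∀ w ∈ L, (I''.wpref w).Perm (I'.wpref w) := fun w hw => (hL w hw).2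
  have hw_pre : ∀ w ∈ L, ((proposals I' μ w).take 2) <+: I''.wpref w := fun w hw => (hL w hw).1
  have hstabC : IsStable I'' μ := rpl_stabC hopt.1 hmp hw_eq hw_perm hw_pre
  refine ⟨hstabC, ?_⟩
  intro ζ hζ m
  have hnPB := rpl_main I' I'' L μ hopt hmp hw_eq hw_perm hw_pre hstabC ζ hζ m
  cases hζm : ζ.μm m with
  | none =>
    cases hμm : μ.μm m with
    | none => exact Or.inl rfl
    | some w => exact Or.inr ⟨w, rfl, (hstabC.1 m w hμm).1⟩
  | some w =>
    cases hμm : μ.μm m with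
    | none =>
      exfalso
      exact hnPB ⟨w, hζm, by rw [hμm]; exact (hζ.1 m w hζm).1⟩
    | some w' =>
      by_cases hww : w' = w
      · exact Or.inl (by rw [hww])
      · refine Or.inr ⟨w', rfl, ?_⟩
        have hwmem : w ∈ I''.mpref m := (hζ.1 m w hζm).1
        have hw'mem : w' ∈ I''.mpref m := (hstabC.1 m w' hμm).1
        have hnp : ¬ I''.mPref m w (some w') := fun hc => hnPB ⟨w, hζm, by rw [hμm]; exact hc⟩
        refine ⟨hw'mem, Or.inr ?_⟩
        rcases rpl_idx_lt_or_lt hw'mem hwmem hww with h | h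
        · exact h
        · exact absurd ⟨hwmem, Or.inr h⟩ hnp
end

section
/- In the permutation manipulation game under the feasibility assumption, a matching is induced by some super-strong Nash equilibrium strategy profile of the manipulators if and only if it is Pareto-optimal among feasible matchings. -/
open List

section AuxProof

variable {M W : Type*} [DecidableEq M] [DecidableEq W]

lemma mPref_irrefl (I : SMInstance M W) (m : M) (w : W) : ¬ I.mPref m w (some w) := by
  rintro ⟨hmem, h | h⟩
  · exact h hmem
  · exact lt_irrefl _ h

lemma wPref_irrefl (I : SMInstance M W) (w : W) (m : M) : ¬ I.wPref w m (some m) := by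
  rintro ⟨hmem, h | h⟩
  · exact h hmem
  · exact lt_irrefl _ h

lemma mPref_ne (I : SMInstance M W) {m : M} {w : W} {o : Option W}
    (h : I.mPref m w o) : o ≠ some w := by
  rintro rfl; exact mPref_irrefl I m w h

lemma mPref_trans (I : SMInstance M W) (hc : ∀ m w, w ∈ I.mpref m)
    {m : M} {w v : W} {o : Option W}
    (h1 : I.mPref m w (some v)) (h2 : I.mPref m v o) : I.mPref m w o := by
  obtain ⟨hw, h1'⟩ := h1
  cases o with
  | none => exact hw
  | some u =>
    obtain ⟨hv, h2'⟩ := h2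
    refine ⟨hw, Or.inr ?_⟩
    have hwv : (I.mpref m).idxOf w < (I.mpref m).idxOf v :=
      h1'.resolve_left (fun h => h hv)
    have hvu : (I.mpref m).idxOf v < (I.mpref m).idxOf u :=
      h2'.resolve_left (fun h => h (hc m u))
    omega

lemma mPref_of_weak (I : SMInstance M W) (hc : ∀ m w, w ∈ I.mpref m)
    {m : M} {w : W} {o₁ o₂ : Option W}
    (h : I.mPref m w o₁) (hw : I.mWeak m o₁ o₂) : I.mPref m w o₂ := by
  rcases hw with rfl | ⟨v, rfl, hp⟩
  · exact h
  · exact mPref_trans I hc h hp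

lemma mPref_asymm (I : SMInstance M W) {m : M} {w v : W}
    (h1 : I.mPref m w (some v)) (h2 : I.mPref m v (some w)) : False := by
  obtain ⟨hw, h1'⟩ := h1
  obtain ⟨hv, h2'⟩ := h2
  have a := h1'.resolve_left (fun h => h hv)
  have b := h2'.resolve_left (fun h => h hw)
  omega

lemma wPref_asymm (I : SMInstance M W) {w : W} {m p : M}
    (h1 : I.wPref w m (some p)) (h2 : I.wPref w p (some m)) : False := by
  obtain ⟨hm, h1'⟩ := h1
  obtain ⟨hp, h2'⟩ := h2
  have a := h1'.resolve_left (fun h => h hp)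
  have b := h2'.resolve_left (fun h => h hm)
  omega

lemma mWeak_antisymm (I : SMInstance M W) {m : M} {o₁ o₂ : Option W}
    (h1 : I.mWeak m o₁ o₂) (h2 : I.mWeak m o₂ o₁) : o₁ = o₂ := by
  rcases h1 with h1 | ⟨w, rfl, hp1⟩
  · exact h1
  rcases h2 with h2 | ⟨v, rfl, hp2⟩
  · exact h2.symm
  exact (mPref_asymm I hp2 hp1).elim

lemma mWeak_of_not_strict (I : SMInstance M W) (hc : ∀ m w, w ∈ I.mpref m)
    {m : M} {o₁ o₂ : Option W}
    (h : ¬ ∃ w, o₂ = some w ∧ I.mPref m w o₁) : I.mWeak m o₁ o₂ := by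
  cases o₂ with
  | none =>
    cases o₁ with
    | none => exact Or.inl rfl
    | some w => exact Or.inr ⟨w, rfl, hc m w⟩
  | some u =>
    have hu : ¬ I.mPref m u o₁ := fun hp => h ⟨u, rfl, hp⟩
    cases o₁ with
    | none => exact absurd (hc m u) hu
    | some v =>
      by_cases hvu : v = u
      · exact Or.inl (by rw [hvu])
      · refine Or.inr ⟨v, rfl, hc m v, Or.inr ?_⟩
        have hlt : ¬ ((I.mpref m).idxOf u < (I.mpref m).idxOf v) := by
          intro hlt; exact hu ⟨hc m u, Or.inr hlt⟩
        have hne : (I.mpref m).idxOf v ≠ (I.mpref m).idxOf u := by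
          intro he
          exact hvu ((List.idxOf_inj (hc m v)).1 he)
        omega

lemma wWeak_of_not_strict (I : SMInstance M W) (hc : ∀ w m, m ∈ I.wpref w)
    {w : W} {o₁ o₂ : Option M}
    (h : ¬ ∃ m, o₂ = some m ∧ I.wPref w m o₁) : I.wWeak w o₁ o₂ := by
  cases o₂ with
  | none =>
    cases o₁ with
    | none => exact Or.inl rfl
    | some m => exact Or.inr ⟨m, rfl, hc w m⟩
  | some u =>
    have hu : ¬ I.wPref w u o₁ := fun hp => h ⟨u, rfl, hp⟩
    cases o₁ with
    | none => exact absurd (hc w u) hu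
    | some v =>
      by_cases hvu : v = u
      · exact Or.inl (by rw [hvu])
      · refine Or.inr ⟨v, rfl, hc w v, Or.inr ?_⟩
        have hlt : ¬ ((I.wpref w).idxOf u < (I.wpref w).idxOf v) := by
          intro hlt; exact hu ⟨hc w u, Or.inr hlt⟩
        have hne : (I.wpref w).idxOf v ≠ (I.wpref w).idxOf u := by
          intro he
          exact hvu ((List.idxOf_inj (hc w v)).1 he)
        omega

/-- If woman `w` does not strictly prefer `m` to `o`, then (with complete lists)
`o` is `m` himself or somebody she strictly prefers to `m`. -/
lemma wPref_rev (I : SMInstance M W) (hc : ∀ w m, m ∈ I.wpref w)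
    {w : W} {m : M} {o : Option M}
    (h : ¬ I.wPref w m o) : o = some m ∨ ∃ p, o = some p ∧ I.wPref w p (some m) := by
  cases o with
  | none => exact absurd (hc w m) h
  | some p =>
    by_cases hpm : p = m
    · exact Or.inl (by rw [hpm])
    · refine Or.inr ⟨p, rfl, hc w p, Or.inr ?_⟩
      have h1 : ¬ ((I.wpref w).idxOf m < (I.wpref w).idxOf p) :=
        fun hlt => h ⟨hc w m, Or.inr hlt⟩
      have h2 : (I.wpref w).idxOf p ≠ (I.wpref w).idxOf m :=
        fun he => hpm ((List.idxOf_inj (hc w p)).1 he)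
      omega

lemma Matching.mw_inj (μ : Matching M W) {w w' : W} {m : M}
    (h1 : μ.μw w = some m) (h2 : μ.μw w' = some m) : w = w' := by
  have a := (μ.consistent m w).2 h1
  have b := (μ.consistent m w').2 h2
  rw [a] at b
  exact Option.some_inj.1 b

lemma Matching.mm_inj (μ : Matching M W) {m m' : M} {w : W}
    (h1 : μ.μm m = some w) (h2 : μ.μm m' = some w) : m = m' := by
  have a := (μ.consistent m w).1 h1
  have b := (μ.consistent m' w).1 h2
  rw [a] at b
  exact Option.some_inj.1 b

lemma mPref_transfer {I I' : SMInstance M W} (hm : I'.mpref = I.mpref)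
    (m : M) (w : W) (o : Option W) : I'.mPref m w o ↔ I.mPref m w o := by
  cases o <;> simp [SMInstance.mPref, hm]

lemma mWeak_transfer {I I' : SMInstance M W} (hm : I'.mpref = I.mpref)
    (m : M) (o₁ o₂ : Option W) : I'.mWeak m o₁ o₂ ↔ I.mWeak m o₁ o₂ := by
  unfold SMInstance.mWeak
  simp only [mPref_transfer hm]

lemma wPref_transfer {I I' : SMInstance M W} {w : W} (hw : I'.wpref w = I.wpref w)
    (m : M) (o : Option M) : I'.wPref w m o ↔ I.wPref w m o := by
  cases o <;> simp [SMInstance.wPref, hw]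

lemma mem_wpref_perm {I I' : SMInstance M W} {L : Set W} (hP : PermManip I I' L)
    (w : W) (m : M) : m ∈ I'.wpref w ↔ m ∈ I.wpref w := by
  by_cases hw : w ∈ L
  · exact (hP.2 w hw).mem_iff
  · rw [hP.1.2 w hw]

/-- Man `m` is strictly better off in `μ''` than in `μ` (true preferences). -/
def ImpM (I : SMInstance M W) (μ μ'' : Matching M W) (m : M) : Prop :=
  ∃ v, μ''.μm m = some v ∧ I.mPref m v (μ.μm m)

/-- Woman `w` is strictly worse off in `μ''` than in `μ` (true preferences). -/
def ImpW (I : SMInstance M W) (μ μ'' : Matching M W) (w : W) : Prop :=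
  ∃ p, μ.μw w = some p ∧ I.wPref w p (μ''.μw w)

/-- Forward-direction core: if `μ'` is a feasible matching that all women
weakly prefer to the feasible `μ`, and all manipulators are matched identically
in the two matchings, then the matchings coincide. -/
lemma forward_core {I Itld : SMInstance M W} {L : Set W} {μ μ' : Matching M W}
    (hc : ∀ m w, w ∈ I.mpref m ∧ m ∈ I.wpref w)
    (hP : PermManip I Itld L) (hMO : IsMenOptimal Itld μ')
    (hμ : IsStable I μ) (hμ' : IsStable I μ')
    (hW : ∀ w, I.wWeak w (μ'.μw w) (μ.μw w))
    (hL : ∀ l ∈ L, μ'.μw l = μ.μw l) :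
    ∀ w, μ'.μw w = μ.μw w := by
  have hcm : ∀ m w, w ∈ I.mpref m := fun m w => (hc m w).1
  have hcw : ∀ w m, m ∈ I.wpref w := fun w m => (hc m w).2
  have hmp : Itld.mpref = I.mpref := hP.1.1
  -- Step 1: every man weakly prefers μ to μ'
  have hmen : ∀ m, I.mWeak m (μ.μm m) (μ'.μm m) := by
    intro m
    apply mWeak_of_not_strict I hcm
    rintro ⟨v, hv, hpv⟩
    have hne : μ.μm m ≠ some v := mPref_ne I hpv
    have hnw : ¬ I.wPref v m (μ.μw v) := fun hww => hμ.2 m v ⟨hne, hpv, hww⟩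
    rcases wPref_rev I hcw hnw with he | ⟨p, hp, hstr⟩
    · exact hne ((μ.consistent m v).2 he)
    · have hμ'v : μ'.μw v = some m := (μ'.consistent m v).1 hv
      have hWv := hW v
      rw [hμ'v, hp] at hWv
      rcases hWv with he2 | ⟨q, hq, hpq⟩
      · obtain rfl : m = p := Option.some_inj.1 he2
        exact wPref_irrefl I v m hstr
      · obtain rfl : m = q := Option.some_inj.1 hq
        exact wPref_asymm I hpq hstr
  -- Step 2: μ is stable with respect to Itld
  have hstab : IsStable Itld μ := by
    constructor
    · intro m w hmw
      exact ⟨by rw [hmp]; exact hcm m w, (mem_wpref_perm hP w m).2 (hcw w m)⟩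
    · rintro m w ⟨hb1, hb2, hb3⟩
      have hb2I : I.mPref m w (μ.μm m) := (mPref_transfer hmp m w _).1 hb2
      by_cases hwL : w ∈ L
      · have hEq := hL w hwL
        have hb3' : Itld.wPref w m (μ'.μw w) := by rw [hEq]; exact hb3
        have hp' : I.mPref m w (μ'.μm m) := mPref_of_weak I hcm hb2I (hmen m)
        exact hMO.1.2 m w ⟨mPref_ne I hp', (mPref_transfer hmp m w _).2 hp', hb3'⟩
      · have hb3I : I.wPref w m (μ.μw w) := (wPref_transfer (hP.1.2 w hwL) m _).1 hb3
        exact hμ.2 m w ⟨hb1, hb2I, hb3I⟩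
  -- Step 3: men-optimality of μ' under Itld forces equality on men
  have hmen' : ∀ m, I.mWeak m (μ'.μm m) (μ.μm m) := by
    intro m
    exact (mWeak_transfer hmp m _ _).1 (hMO.2 μ hstab m)
  have hmeq : ∀ m, μ'.μm m = μ.μm m := fun m => mWeak_antisymm I (hmen' m) (hmen m)
  intro w
  cases h1 : μ'.μw w with
  | some m =>
    have h2 : μ.μm m = some w := by rw [← hmeq m]; exact (μ'.consistent m w).2 h1
    exact ((μ.consistent m w).1 h2).symm
  | none =>
    cases h2 : μ.μw w with
    | none => rfl
    | some m =>
      have h3 : μ'.μm m = some w := by rw [hmeq m]; exact (μ.consistent m w).2 h2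
      have h4 := (μ'.consistent m w).1 h3
      rw [h1] at h4
      exact absurd h4 (by simp)

/-- Sisterhood-style lemma: if a coalition `Ls` deviates and every deviator
weakly improves (w.r.t. the true preferences), then every woman weakly improves. -/
lemma sister {I I' I'' : SMInstance M W} [Fintype M] [Fintype W] {L Ls : Set W}
    {μ μ'' : Matching M W}
    (hc : ∀ m w, w ∈ I.mpref m ∧ m ∈ I.wpref w)
    (hP' : PermManip I I' L) (hP'' : PermManip I I'' L)
    (hAg : ∀ w ∉ Ls, I''.wpref w = I'.wpref w)
    (hMO' : IsMenOptimal I' μ) (hMO'' : IsMenOptimal I'' μ'')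
    (hμ : IsStable I μ) (hμ'' : IsStable I μ'')
    (hLs : ∀ l ∈ Ls, I.wWeak l (μ''.μw l) (μ.μw l)) :
    ∀ w, I.wWeak w (μ''.μw w) (μ.μw w) := by
  classical
  have hcm : ∀ m w, w ∈ I.mpref m := fun m w => (hc m w).1
  have hcw : ∀ w m, m ∈ I.wpref w := fun w m => (hc m w).2
  -- a strictly worse-off woman's μ-partner is strictly better off
  have lemS1 : ∀ w p, μ.μw w = some p → I.wPref w p (μ''.μw w) → ImpM I μ μ'' p := by
    intro w p h1 h2
    by_contra hA
    have hweak : I.mWeak p (μ.μm p) (μ''.μm p) := mWeak_of_not_strict I hcm hA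
    have hmp : μ.μm p = some w := (μ.consistent p w).2 h1
    rcases hweak with he | ⟨u, hu, hpu⟩
    · have h3 : μ''.μm p = some w := by rw [← he]; exact hmp
      have h4 : μ''.μw w = some p := (μ''.consistent p w).1 h3
      rw [h4] at h2
      exact wPref_irrefl I w p h2
    · have huw : u = w := Option.some_inj.1 (hu.symm.trans hmp)
      rw [huw] at hpu
      exact hμ''.2 p w ⟨mPref_ne I hpu, hpu, h2⟩
  -- a strictly better-off man's μ''-partner is strictly worse off
  have lemS2 : ∀ m v, μ''.μm m = some v → I.mPref m v (μ.μm m) → ImpW I μ μ'' v := by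
    intro m v h1 h2
    have hne : μ.μm m ≠ some v := mPref_ne I h2
    have hnw : ¬ I.wPref v m (μ.μw v) := fun hww => hμ.2 m v ⟨hne, h2, hww⟩
    rcases wPref_rev I hcw hnw with he | ⟨p, hp, hstr⟩
    · exact absurd ((μ.consistent m v).2 he) hne
    · have h3 : μ''.μw v = some m := (μ''.consistent m v).1 h1
      exact ⟨p, hp, by rw [h3]; exact hstr⟩
  -- strictly worse-off women are not deviators
  have hWls : ∀ w, ImpW I μ μ'' w → w ∉ Ls := by
    intro w hB hmem
    obtain ⟨p, hp1, hp2⟩ := hB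
    have h := hLs w hmem
    rw [hp1] at h
    rcases h with he | ⟨m', hm', hpm'⟩
    · rw [he] at hp2; exact wPref_irrefl I w p hp2
    · rw [hm'] at hp2; exact wPref_asymm I hp2 hpm'
  -- counting: better-off men and worse-off women are in bijection
  have hTWA : ∀ (x : {w : W // ImpW I μ μ'' w}), ImpM I μ μ'' (Classical.choose x.2) ∧
      μ.μw x.1 = some (Classical.choose x.2) := by
    intro x
    obtain ⟨h1, h2⟩ := Classical.choose_spec x.2
    exact ⟨lemS1 x.1 _ h1 h2, h1⟩
  have hTAW : ∀ (x : {m : M // ImpM I μ μ'' m}), ImpW I μ μ'' (Classical.choose x.2) ∧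
      μ''.μm x.1 = some (Classical.choose x.2) := by
    intro x
    obtain ⟨h1, h2⟩ := Classical.choose_spec x.2
    exact ⟨lemS2 x.1 _ h1 h2, h1⟩
  let e₁ : {w : W // ImpW I μ μ'' w} → {m : M // ImpM I μ μ'' m} :=
    fun x => ⟨Classical.choose x.2, (hTWA x).1⟩
  have he₁ : Function.Injective e₁ := by
    intro x y hxy
    have hx := (hTWA x).2
    have hy := (hTWA y).2
    have hv : Classical.choose x.2 = Classical.choose y.2 := congrArg Subtype.val hxy
    rw [hv] at hx
    exact Subtype.ext (μ.mw_inj hx hy)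
  let e₂ : {m : M // ImpM I μ μ'' m} → {w : W // ImpW I μ μ'' w} :=
    fun x => ⟨Classical.choose x.2, (hTAW x).1⟩
  have he₂ : Function.Injective e₂ := by
    intro x y hxy
    have hx := (hTAW x).2
    have hy := (hTAW y).2
    have hv : Classical.choose x.2 = Classical.choose y.2 := congrArg Subtype.val hxy
    rw [hv] at hx
    exact Subtype.ext (μ''.mm_inj hx hy)
  have hcard : Fintype.card {m : M // ImpM I μ μ'' m} =
      Fintype.card {w : W // ImpW I μ μ'' w} :=
    le_antisymm (Fintype.card_le_of_injective e₂ he₂) (Fintype.card_le_of_injective e₁ he₁)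
  have hbij₂ : Function.Bijective e₂ :=
    (Fintype.bijective_iff_injective_and_card e₂).2 ⟨he₂, hcard⟩
  have hbij₁ : Function.Bijective e₁ :=
    (Fintype.bijective_iff_injective_and_card e₁).2 ⟨he₁, hcard.symm⟩
  have key1 : ∀ w p, ImpW I μ μ'' w → μ''.μw w = some p → ImpM I μ μ'' p := by
    intro w p hw hp
    obtain ⟨x, hx⟩ := hbij₂.2 ⟨w, hw⟩
    have h1 : Classical.choose x.2 = w := congrArg Subtype.val hx
    have h2 := (hTAW x).2
    rw [h1] at h2
    have h3 : μ''.μw w = some x.1 := (μ''.consistent x.1 w).1 h2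
    rw [hp] at h3
    have hpm : p = x.1 := Option.some_inj.1 h3
    rw [hpm]; exact x.2
  have key2 : ∀ m w, ImpM I μ μ'' m → μ.μm m = some w → ImpW I μ μ'' w := by
    intro m w hm hw
    obtain ⟨x, hx⟩ := hbij₁.2 ⟨m, hm⟩
    have h1 : Classical.choose x.2 = m := congrArg Subtype.val hx
    have h2 := (hTWA x).2
    rw [h1] at h2
    have h3 : μ.μm m = some x.1 := (μ.consistent m x.1).2 h2
    rw [hw] at h3
    have hxw : w = x.1 := Option.some_inj.1 h3
    rw [hxw]; exact x.2
  -- the "rotated" matching ρ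
  let ρ : Matching M W :=
    { μm := fun m => if ImpM I μ μ'' m then μ''.μm m else μ.μm m
      μw := fun w => if ImpW I μ μ'' w then μ''.μw w else μ.μw w
      consistent := by
        intro m w
        show (if ImpM I μ μ'' m then μ''.μm m else μ.μm m) = some w ↔
          (if ImpW I μ μ'' w then μ''.μw w else μ.μw w) = some m
        constructor
        · intro h
          by_cases hA : ImpM I μ μ'' m
          · rw [if_pos hA] at h
            obtain ⟨v, hv, hpv⟩ := hA
            have hvw : v = w := Option.some_inj.1 (hv.symm.trans h)
            rw [hvw] at hpv
            have hB : ImpW I μ μ'' w := lemS2 m w h hpv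
            rw [if_pos hB]
            exact (μ''.consistent m w).1 h
          · rw [if_neg hA] at h
            have hB : ¬ ImpW I μ μ'' w := by
              intro hB
              obtain ⟨p, hp1, hp2⟩ := hB
              have hpm : p = m :=
                Option.some_inj.1 (hp1.symm.trans ((μ.consistent m w).1 h))
              rw [hpm] at hp1 hp2
              exact hA (lemS1 w m hp1 hp2)
            rw [if_neg hB]
            exact (μ.consistent m w).1 h
        · intro h
          by_cases hB : ImpW I μ μ'' w
          · rw [if_pos hB] at h
            have hA : ImpM I μ μ'' m := key1 w m hB h
            rw [if_pos hA]
            exact (μ''.consistent m w).2 h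
          · rw [if_neg hB] at h
            have hA : ¬ ImpM I μ μ'' m := by
              intro hA
              exact hB (key2 m w hA ((μ.consistent m w).2 h))
            rw [if_neg hA]
            exact (μ.consistent m w).2 h }
  have hρm : ∀ m, ρ.μm m = if ImpM I μ μ'' m then μ''.μm m else μ.μm m := fun _ => rfl
  have hρw : ∀ w, ρ.μw w = if ImpW I μ μ'' w then μ''.μw w else μ.μw w := fun _ => rfl
  -- ρ is stable with respect to I'
  have hρstab : IsStable I' ρ := by
    constructor
    · intro m w hmw
      exact ⟨by rw [hP'.1.1]; exact hcm m w, (mem_wpref_perm hP' w m).2 (hcw w m)⟩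
    · rintro m w ⟨hb1, hb2, hb3⟩
      have hb2I : I.mPref m w (ρ.μm m) := (mPref_transfer hP'.1.1 m w _).1 hb2
      by_cases hA : ImpM I μ μ'' m
      · have hρm' : ρ.μm m = μ''.μm m := by rw [hρm m, if_pos hA]
        obtain ⟨v, hv, hpv⟩ := hA
        have hb2'' : I.mPref m w (μ''.μm m) := by rwa [hρm'] at hb2I
        have hb2μ : I.mPref m w (μ.μm m) := by
          rw [hv] at hb2''
          exact mPref_trans I hcm hb2'' hpv
        by_cases hB : ImpW I μ μ'' w
        · have hwLs : w ∉ Ls := hWls w hB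
          have hρw' : ρ.μw w = μ''.μw w := by rw [hρw w, if_pos hB]
          rw [hρm'] at hb1
          rw [hρw'] at hb3
          exact hMO''.1.2 m w ⟨hb1, (mPref_transfer hP''.1.1 m w _).2 hb2'',
            (wPref_transfer (hAg w hwLs) m _).2 hb3⟩
        · have hρw' : ρ.μw w = μ.μw w := by rw [hρw w, if_neg hB]
          rw [hρw'] at hb3
          exact hMO'.1.2 m w ⟨mPref_ne I hb2μ, (mPref_transfer hP'.1.1 m w _).2 hb2μ, hb3⟩
      · have hρm' : ρ.μm m = μ.μm m := by rw [hρm m, if_neg hA]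
        have hb2μ : I.mPref m w (μ.μm m) := by rwa [hρm'] at hb2I
        by_cases hB : ImpW I μ μ'' w
        · have hwLs : w ∉ Ls := hWls w hB
          have hweak : I.mWeak m (μ.μm m) (μ''.μm m) := mWeak_of_not_strict I hcm hA
          have hb2'' : I.mPref m w (μ''.μm m) := mPref_of_weak I hcm hb2μ hweak
          have hρw' : ρ.μw w = μ''.μw w := by rw [hρw w, if_pos hB]
          rw [hρw'] at hb3
          exact hMO''.1.2 m w ⟨mPref_ne I hb2'', (mPref_transfer hP''.1.1 m w _).2 hb2'',
            (wPref_transfer (hAg w hwLs) m _).2 hb3⟩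
        · have hρw' : ρ.μw w = μ.μw w := by rw [hρw w, if_neg hB]
          rw [hρm'] at hb1
          rw [hρw'] at hb3
          exact hMO'.1.2 m w ⟨hb1, (mPref_transfer hP'.1.1 m w _).2 hb2μ, hb3⟩
  -- men-optimality of μ under I' forbids any strictly better-off man
  have hAempty : ∀ m, ¬ ImpM I μ μ'' m := by
    intro m hA
    obtain ⟨v, hv, hpv⟩ := hA
    have hA' : ImpM I μ μ'' m := ⟨v, hv, hpv⟩
    have hwk := (mWeak_transfer hP'.1.1 m _ _).1 (hMO'.2 ρ hρstab m)
    have hρm' : ρ.μm m = μ''.μm m := by rw [hρm m, if_pos hA']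
    rw [hρm', hv] at hwk
    rcases hwk with he | ⟨u, hu, hpu⟩
    · rw [he] at hpv; exact mPref_irrefl I m v hpv
    · rw [hu] at hpv; exact mPref_asymm I hpu hpv
  intro w
  apply wWeak_of_not_strict I hcw
  rintro ⟨p, hp1, hp2⟩
  exact hAempty p (lemS1 w p hp1 hp2)

end AuxProof

/-- in the permutation-manipulation game under the feasibility
assumption, a matching is induced by some super-strong Nash equilibrium iff it is
Pareto-optimal among feasible matchings. -/
theorem ssne_iff_pareto {M W : Type*} [DecidableEq M] [DecidableEq W]
    [Fintype M] [Fintype W] (I : SMInstance M W) (L : Set W)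
    (hcomplete : ∀ m w, w ∈ I.mpref m ∧ m ∈ I.wpref w) (μ : Matching M W) :
    (∃ I', SuperStrongNE I L I' μ) ↔ ParetoOptimal I L μ := by
  constructor
  · rintro ⟨I', hPM, hMOμ, hSt, hNE⟩
    refine ⟨⟨hSt, I', hPM, hMOμ⟩, ?_⟩
    rintro ⟨μ', ⟨hStμ', Itld, hPMt, hMOt⟩, hWall, w₀, hstrict⟩
    have hAg : ∀ w ∉ L, Itld.wpref w = I'.wpref w := by
      intro w hw
      rw [hPMt.1.2 w hw, hPM.1.2 w hw]
    have hno := hNE L subset_rfl Itld μ' hPMt hAg hMOt hStμ'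
    have hLeq : ∀ l ∈ L, μ'.μw l = μ.μw l := by
      intro l hl
      rcases hWall l with he | hs
      · exact he
      · exact absurd ⟨fun l' _ => hWall l', l, hl, hs⟩ hno
    have heq := forward_core hcomplete hPMt hMOt hSt hStμ' hWall hLeq
    obtain ⟨m₀, hm1, hm2⟩ := hstrict
    rw [heq w₀] at hm1
    rw [hm1] at hm2
    exact wPref_irrefl I w₀ m₀ hm2
  · rintro ⟨⟨hSt, I', hPM, hMO⟩, hND⟩
    refine ⟨I', hPM, hMO, hSt, ?_⟩
    rintro Ls hLsub I'' μ'' hP'' hAg hMO'' hSt'' ⟨hweak, l₀, hl₀, hstr⟩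
    exact hND ⟨μ'', ⟨hSt'', I'', hP'', hMO''⟩,
      sister hcomplete hPM hP'' hAg hMO hMO'' hSt hSt'' hweak, l₀, hstr⟩
end

section
/- Given a coalition of lying women using general manipulations in the men-proposing Gale-Shapley algorithm, if no lying woman is matched worse than under truthful reporting, then no woman at all is matched worse and no man is matched better. -/
open List

section AuxSister

variable {α : Type*} [DecidableEq α]

/-- Generic strict list preference: `a` is preferred to the optional assignment `o`. -/
def listPref (l : List α) (a : α) : Option α → Prop
  | some b => a ∈ l ∧ (b ∉ l ∨ l.idxOf a < l.idxOf b)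
  | none => a ∈ l

lemma listPref_mem {l : List α} {a : α} {o : Option α} (h : listPref l a o) : a ∈ l := by
  cases o with
  | none => exact h
  | some b => exact h.1

lemma listPref_irrefl (l : List α) (a : α) : ¬ listPref l a (some a) := by
  rintro ⟨ha, h | h⟩
  · exact h ha
  · exact lt_irrefl _ h

lemma listPref_asymm {l : List α} {a b : α} (h1 : listPref l a (some b))
    (h2 : listPref l b (some a)) : False := by
  obtain ⟨ha, h1⟩ := h1
  obtain ⟨hb, h2⟩ := h2
  rcases h1 with h | h1
  · exact h hb
  rcases h2 with h | h2
  · exact h ha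
  omega

lemma listPref_trans {l : List α} {a b : α} {o : Option α}
    (h1 : listPref l a (some b)) (h2 : listPref l b o) : listPref l a o := by
  cases o with
  | none => exact h1.1
  | some c =>
    obtain ⟨ha, h1⟩ := h1
    obtain ⟨hb, h2⟩ := h2
    refine ⟨ha, ?_⟩
    rcases h1 with h | h1
    · exact absurd hb h
    rcases h2 with h | h2
    · exact Or.inl h
    · exact Or.inr (h1.trans h2)

lemma listPref_resolve {l : List α} {a : α} {o : Option α}
    (ha : a ∈ l) (ho : ∀ b, o = some b → b ∈ l) (hne : o ≠ some a)
    (h : ¬ listPref l a o) : ∃ b, o = some b ∧ listPref l b (some a) := by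
  cases o with
  | none => exact absurd ha h
  | some b =>
    have hb := ho b rfl
    have h3 : ¬ l.idxOf a < l.idxOf b := fun hl => h ⟨ha, Or.inr hl⟩
    have h4 : l.idxOf b ≠ l.idxOf a := fun he =>
      hne (by rw [(List.idxOf_inj hb).mp he])
    exact ⟨b, rfl, hb, Or.inr (by omega)⟩

lemma mPref_eq {M W : Type*} [DecidableEq M] [DecidableEq W] (I : SMInstance M W)
    (m : M) (w : W) (o : Option W) : I.mPref m w o = listPref (I.mpref m) w o := by
  cases o <;> rfl

lemma wPref_eq {M W : Type*} [DecidableEq M] [DecidableEq W] (I : SMInstance M W)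
    (w : W) (m : M) (o : Option M) : I.wPref w m o = listPref (I.wpref w) m o := by
  cases o <;> rfl

end AuxSister

/-- sisterhood theorem: if no lying woman is worse off, then no
woman is worse off and no man is better off. -/
theorem sisterhood {M W : Type*} [DecidableEq M] [DecidableEq W]
    [Fintype M] [Fintype W] (I I' : SMInstance M W) (L : Set W) (μ μ' : Matching M W)
    (hG : GeneralManip I I' L)
    (hμ : IsMenOptimal I μ) (hμ' : IsMenOptimal I' μ')
    (hyp : ∀ w ∈ L, I.wWeak w (μ'.μw w) (μ.μw w)) :
    (∀ w, I.wWeak w (μ'.μw w) (μ.μw w)) ∧ (∀ m, I.mWeak m (μ.μm m) (μ'.μm m)) := by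
  classical
  obtain ⟨hmpref, hwpref⟩ := hG
  have hIR : IndivRational I μ := hμ.1.1
  have hIR' : IndivRational I' μ' := hμ'.1.1
  have hnbμ : ∀ m w, ¬ BlockingPair I μ m w := hμ.1.2
  have hnbμ' : ∀ m w, ¬ BlockingPair I' μ' m w := hμ'.1.2
  -- acceptability of μ'-partners on the men's side, w.r.t. true preferences
  have hIRm' : ∀ m w, μ'.μm m = some w → w ∈ I.mpref m := by
    intro m w h
    have := (hIR' m w h).1
    rwa [hmpref] at this
  -- acceptability of μ'-partners on the women's side, w.r.t. true preferences
  have hIRw' : ∀ w m, μ'.μw w = some m → m ∈ I.wpref w := by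
    intro w m h
    by_cases hL : w ∈ L
    · rcases hyp w hL with he | ⟨m₁, he, hp⟩
      · rw [he] at h
        exact (hIR m w ((μ.consistent m w).mpr h)).2
      · rw [h] at he
        obtain rfl : m = m₁ := Option.some_inj.mp he
        rw [wPref_eq] at hp
        exact listPref_mem hp
    · rw [← hwpref w hL]
      exact (hIR' m w ((μ'.consistent m w).mpr h)).2
  -- the set of men strictly better off in μ'
  set Mp : Set M := {m | ∃ w, μ'.μm m = some w ∧ I.mPref m w (μ.μm m)} with hMpdef
  -- Claim: if m ∈ Mp with μ'-partner w', then w' is truthful and truly prefers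
  -- her μ-partner (who exists) to m.
  have hC2 : ∀ m ∈ Mp, ∀ w', μ'.μm m = some w' →
      w' ∉ L ∧ ∃ p, μ.μw w' = some p ∧ listPref (I.wpref w') p (some m) := by
    intro m hm w' hw'
    obtain ⟨w'', hw'', hpref⟩ := hm
    rw [hw'] at hw''
    obtain rfl : w' = w'' := Option.some_inj.mp hw''
    rw [mPref_eq] at hpref
    have hμw' : μ'.μw w' = some m := (μ'.consistent m w').mp hw'
    have hne : μ.μm m ≠ some w' := by
      intro he
      rw [he] at hpref
      exact listPref_irrefl _ _ hpref
    have hnw : ¬ I.wPref w' m (μ.μw w') := fun hw =>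
      hnbμ m w' ⟨hne, by rw [mPref_eq]; exact hpref, hw⟩
    have hLw : w' ∉ L := by
      intro hL
      rcases hyp w' hL with he | ⟨m₁, he, hp⟩
      · rw [hμw'] at he
        exact hne ((μ.consistent m w').mpr he.symm)
      · rw [hμw'] at he
        obtain rfl : m = m₁ := Option.some_inj.mp he
        exact hnw hp
    have hmem : m ∈ I.wpref w' := hIRw' w' m hμw'
    have hne2 : μ.μw w' ≠ some m := fun he => hne ((μ.consistent m w').mpr he)
    rw [wPref_eq] at hnw
    obtain ⟨p, hp, hpp⟩ := listPref_resolve hmem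
      (fun p hp => (hIR p w' ((μ.consistent p w').mpr hp)).2) hne2 hnw
    exact ⟨hLw, p, hp, hpp⟩
  -- Key: a truthful woman who truly prefers her μ-partner to her μ'-assignment
  -- witnesses that her μ-partner is in Mp.
  have key : ∀ w, w ∉ L → ∀ p, μ.μw w = some p → I.wPref w p (μ'.μw w) → p ∈ Mp := by
    intro w hL p hp hpref
    have hμp : μ.μm p = some w := (μ.consistent p w).mpr hp
    have hA : μ'.μm p ≠ some w := by
      intro he
      have h2 : μ'.μw w = some p := (μ'.consistent p w).mp he
      rw [h2, wPref_eq] at hpref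
      exact listPref_irrefl _ _ hpref
    have hC : I'.wPref w p (μ'.μw w) := by
      rw [wPref_eq, hwpref w hL]
      rw [wPref_eq] at hpref
      exact hpref
    have hB : ¬ I'.mPref p w (μ'.μm p) := fun hB => hnbμ' p w ⟨hA, hB, hC⟩
    rw [mPref_eq, hmpref] at hB
    have hwmem : w ∈ I.mpref p := (hIR p w hμp).1
    cases hv : μ'.μm p with
    | none =>
      rw [hv] at hB
      exact absurd hwmem hB
    | some v =>
      rw [hv] at hB
      have hvmem : v ∈ I.mpref p := hIRm' p v hv
      have hnev : (some v : Option W) ≠ some w := by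
        intro he
        obtain rfl : v = w := Option.some_inj.mp he
        exact hA hv
      obtain ⟨b, hb, hres⟩ := listPref_resolve hwmem
        (fun b hb => by rw [← Option.some_inj.mp hb]; exact hvmem) hnev hB
      obtain rfl : v = b := Option.some_inj.mp hb
      exact ⟨v, hv, by rw [mPref_eq, hμp]; exact hres⟩
  -- Main step: Mp is empty.
  have hMpE : Mp = ∅ := by
    by_contra hne
    obtain ⟨m₀, hm₀⟩ := Set.nonempty_iff_ne_empty.mpr hne
    by_cases hcase : ∀ m ∈ Mp, ∀ w', μ'.μm m = some w' → ∀ p, μ.μw w' = some p → p ∈ Mp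
    · -- the image sets coincide: build the hybrid matching ν and contradict
      have hdata : ∀ m ∈ Mp, ∃ w', μ'.μm m = some w' ∧ ∃ p, μ.μw w' = some p ∧ p ∈ Mp := by
        intro m hm
        obtain ⟨w', hw', -⟩ := id hm
        obtain ⟨-, p, hp, -⟩ := hC2 m hm w' hw'
        exact ⟨w', hw', p, hp, hcase m hm w' hw' p hp⟩
      set Ws : Set W := {w | ∃ m ∈ Mp, μ'.μm m = some w} with hWsdef
      set g : M → M := fun m => ((μ'.μm m).bind μ.μw).getD m with hgdef
      have hg : ∀ m ∈ Mp, ∃ w', μ'.μm m = some w' ∧ μ.μw w' = some (g m) ∧ g m ∈ Mp := by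
        intro m hm
        obtain ⟨w', hw', p, hp, hpMp⟩ := hdata m hm
        have hgm : g m = p := by rw [hgdef]; simp [hw', hp]
        rw [hgm]
        exact ⟨w', hw', hp, hpMp⟩
      have hmaps : Set.MapsTo g Mp Mp := by
        intro m hm
        obtain ⟨_, _, _, h⟩ := hg m hm
        exact h
      have hinj : Set.InjOn g Mp := by
        intro m₁ h₁ m₂ h₂ he
        obtain ⟨w₁, hw₁, hp₁, -⟩ := hg m₁ h₁
        obtain ⟨w₂, hw₂, hp₂, -⟩ := hg m₂ h₂
        rw [he] at hp₁
        have hmm₁ : μ.μm (g m₂) = some w₁ := (μ.consistent _ _).mpr hp₁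
        have hmm₂ : μ.μm (g m₂) = some w₂ := (μ.consistent _ _).mpr hp₂
        rw [hmm₁] at hmm₂
        obtain rfl : w₁ = w₂ := Option.some_inj.mp hmm₂
        have e₁ : μ'.μw w₁ = some m₁ := (μ'.consistent m₁ w₁).mp hw₁
        have e₂ : μ'.μw w₁ = some m₂ := (μ'.consistent m₂ w₁).mp hw₂
        rw [e₁] at e₂
        exact Option.some_inj.mp e₂
      have hsurj : Set.SurjOn g Mp Mp :=
        ((Set.Finite.injOn_iff_bijOn_of_mapsTo (Set.toFinite Mp) hmaps).mp hinj).surjOn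
      have hWs' : ∀ m ∈ Mp, ∀ w, μ.μm m = some w → w ∈ Ws := by
        intro m hm w hw
        obtain ⟨m₁, hm₁, he⟩ := hsurj hm
        obtain ⟨w₁, hw₁, hp₁, -⟩ := hg m₁ hm₁
        rw [he] at hp₁
        have h2 : μ.μm m = some w₁ := (μ.consistent m w₁).mpr hp₁
        rw [hw] at h2
        obtain rfl : w = w₁ := Option.some_inj.mp h2
        exact ⟨m₁, hm₁, hw₁⟩
      have hWsμ : ∀ w ∈ Ws, ∃ p ∈ Mp, μ.μw w = some p := by
        intro w hw
        obtain ⟨m, hm, hμ'm⟩ := hw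
        obtain ⟨-, p, hp, -⟩ := hC2 m hm w hμ'm
        exact ⟨p, hcase m hm w hμ'm p hp, hp⟩
      have hconsν : ∀ m w, (if m ∈ Mp then μ'.μm m else μ.μm m) = some w ↔
          (if w ∈ Ws then μ'.μw w else μ.μw w) = some m := by
        intro m w
        constructor
        · intro h
          by_cases hm : m ∈ Mp
          · rw [if_pos hm] at h
            rw [if_pos (show w ∈ Ws from ⟨m, hm, h⟩)]
            exact (μ'.consistent m w).mp h
          · rw [if_neg hm] at h
            have hwWs : w ∉ Ws := by
              intro hws
              obtain ⟨p, hpMp, hpw⟩ := hWsμ w hws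
              have h2 : μ.μw w = some m := (μ.consistent m w).mp h
              rw [h2] at hpw
              obtain rfl : m = p := Option.some_inj.mp hpw
              exact hm hpMp
            rw [if_neg hwWs]
            exact (μ.consistent m w).mp h
        · intro h
          by_cases hw : w ∈ Ws
          · rw [if_pos hw] at h
            obtain ⟨m₁, hm₁, hμ'm₁⟩ := hw
            have h2 : μ'.μw w = some m₁ := (μ'.consistent m₁ w).mp hμ'm₁
            rw [h2] at h
            obtain rfl : m₁ = m := Option.some_inj.mp h
            rw [if_pos hm₁]
            exact hμ'm₁
          · rw [if_neg hw] at h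
            have hmMp : m ∉ Mp := by
              intro hm
              exact hw (hWs' m hm w ((μ.consistent m w).mpr h))
            rw [if_neg hmMp]
            exact (μ.consistent m w).mpr h
      set ν : Matching M W := ⟨fun m => if m ∈ Mp then μ'.μm m else μ.μm m,
        fun w => if w ∈ Ws then μ'.μw w else μ.μw w, hconsν⟩ with hνdef
      have hνm : ∀ m, ν.μm m = if m ∈ Mp then μ'.μm m else μ.μm m := fun _ => rfl
      have hνw : ∀ w, ν.μw w = if w ∈ Ws then μ'.μw w else μ.μw w := fun _ => rfl
      by_cases hstabν : IsStable I ν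
      · -- contradiction with men-optimality of μ
        have hopt := hμ.2 ν hstabν m₀
        obtain ⟨w₀, hw₀, hpref₀⟩ := hm₀
        have hν₀ : ν.μm m₀ = some w₀ := by
          rw [hνm m₀, if_pos (show m₀ ∈ Mp from ⟨w₀, hw₀, hpref₀⟩), hw₀]
        rw [hν₀] at hopt
        rw [mPref_eq] at hpref₀
        rcases hopt with he | ⟨w₁, he, hp⟩
        · rw [he] at hpref₀
          exact listPref_irrefl _ _ hpref₀
        · rw [he] at hpref₀
          rw [mPref_eq] at hp
          exact listPref_asymm hpref₀ hp
      · -- ν is individually rational, hence has a blocking pair; contradiction in all cases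
        have hIRν : IndivRational I ν := by
          intro m w h
          rw [hνm] at h
          by_cases hm : m ∈ Mp
          · rw [if_pos hm] at h
            exact ⟨hIRm' m w h, hIRw' w m ((μ'.consistent m w).mp h)⟩
          · rw [if_neg hm] at h
            exact hIR m w h
        have hbp : ∃ m w, BlockingPair I ν m w := by
          by_contra hno
          push_neg at hno
          exact hstabν ⟨hIRν, hno⟩
        obtain ⟨m, w, hBne, hBm, hBw⟩ := hbp
        rw [hνm] at hBne hBm
        rw [hνw] at hBw
        by_cases hm : m ∈ Mp <;> by_cases hw : w ∈ Ws
        · -- m ∈ Mp, w ∈ Ws : blocks μ' in I'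
          rw [if_pos hm] at hBne hBm
          rw [if_pos hw] at hBw
          have hLw : w ∉ L := by
            obtain ⟨m₁, hm₁, h₁⟩ := hw
            exact (hC2 m₁ hm₁ w h₁).1
          refine hnbμ' m w ⟨hBne, ?_, ?_⟩
          · rw [mPref_eq, hmpref]
            rw [mPref_eq] at hBm
            exact hBm
          · rw [wPref_eq, hwpref w hLw]
            rw [wPref_eq] at hBw
            exact hBw
        · -- m ∈ Mp, w ∉ Ws : blocks μ in I
          rw [if_pos hm] at hBne hBm
          rw [if_neg hw] at hBw
          obtain ⟨w', hw', hpref⟩ := hm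
          rw [hw'] at hBne hBm
          rw [mPref_eq] at hBm hpref
          have htr : listPref (I.mpref m) w (μ.μm m) := listPref_trans hBm hpref
          have hneμ : μ.μm m ≠ some w := by
            intro he
            rw [he] at hpref
            exact listPref_asymm hBm hpref
          exact hnbμ m w ⟨hneμ, by rw [mPref_eq]; exact htr, hBw⟩
        · -- m ∉ Mp, w ∈ Ws : blocks μ' in I'
          rw [if_neg hm] at hBne hBm
          rw [if_pos hw] at hBw
          have hLw : w ∉ L := by
            obtain ⟨m₁, hm₁, h₁⟩ := hw
            exact (hC2 m₁ hm₁ w h₁).1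
          have hA : μ'.μm m ≠ some w := by
            intro he
            have h2 : μ'.μw w = some m := (μ'.consistent m w).mp he
            rw [h2, wPref_eq] at hBw
            exact listPref_irrefl _ _ hBw
          have hwmem : w ∈ I.mpref m := by
            rw [mPref_eq] at hBm
            exact listPref_mem hBm
          have hB : I.mPref m w (μ'.μm m) := by
            cases hv : μ'.μm m with
            | none => rw [mPref_eq]; exact hwmem
            | some v =>
              have hvmem : v ∈ I.mpref m := hIRm' m v hv
              cases hu : μ.μm m with
              | none => exact absurd ⟨v, hv, by rw [mPref_eq, hu]; exact hvmem⟩ hm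
              | some u =>
                by_cases huv : u = v
                · rw [mPref_eq]
                  rw [hu, huv, mPref_eq] at hBm
                  exact hBm
                · have hnMp : ¬ I.mPref m v (μ.μm m) := fun hc => hm ⟨v, hv, hc⟩
                  rw [mPref_eq, hu] at hnMp
                  obtain ⟨b, hb, hres⟩ := listPref_resolve hvmem
                    (fun b hb => by rw [← Option.some_inj.mp hb]; exact (hIR m u hu).1)
                    (fun heq => huv (Option.some_inj.mp heq)) hnMp
                  obtain rfl : u = b := Option.some_inj.mp hb
                  rw [hu, mPref_eq] at hBm
                  rw [mPref_eq]
                  exact listPref_trans hBm hres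
          refine hnbμ' m w ⟨hA, ?_, ?_⟩
          · rw [mPref_eq, hmpref]
            rw [mPref_eq] at hB
            exact hB
          · rw [wPref_eq, hwpref w hLw]
            rw [wPref_eq] at hBw
            exact hBw
        · -- m ∉ Mp, w ∉ Ws : blocks μ in I
          rw [if_neg hm] at hBne hBm
          rw [if_neg hw] at hBw
          exact hnbμ m w ⟨hBne, hBm, hBw⟩
    · -- some m ∈ Mp whose μ'-partner's μ-partner is outside Mp : blocks μ' in I'
      push_neg at hcase
      obtain ⟨m, hm, w', hw', p, hp, hpMp⟩ := hcase
      obtain ⟨hLw, p', hp', hpp⟩ := hC2 m hm w' hw'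
      rw [hp] at hp'
      obtain rfl : p = p' := Option.some_inj.mp hp'
      have hμw' : μ'.μw w' = some m := (μ'.consistent m w').mp hw'
      have hA : μ'.μm p ≠ some w' := by
        intro he
        have h2 : μ'.μw w' = some p := (μ'.consistent p w').mp he
        rw [hμw'] at h2
        obtain rfl : m = p := Option.some_inj.mp h2
        exact hpMp hm
      have hμpm : μ.μm p = some w' := (μ.consistent p w').mpr hp
      have hwmem : w' ∈ I.mpref p := (hIR p w' hμpm).1
      have hB : I'.mPref p w' (μ'.μm p) := by
        rw [mPref_eq, hmpref]
        cases hv : μ'.μm p with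
        | none => exact hwmem
        | some v =>
          have hvmem : v ∈ I.mpref p := hIRm' p v hv
          have hnp : ¬ I.mPref p v (μ.μm p) := fun hc => hpMp ⟨v, hv, hc⟩
          rw [mPref_eq, hμpm] at hnp
          have hnev : (some w' : Option W) ≠ some v := by
            intro he
            obtain rfl : w' = v := Option.some_inj.mp he
            exact hA hv
          obtain ⟨b, hb, hres⟩ := listPref_resolve hvmem
            (fun b hb => by rw [← Option.some_inj.mp hb]; exact hwmem) hnev hnp
          obtain rfl : w' = b := Option.some_inj.mp hb
          exact hres
      have hCp : I'.wPref w' p (μ'.μw w') := by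
        rw [wPref_eq, hwpref w' hLw, hμw']
        exact hpp
      exact hnbμ' p w' ⟨hA, hB, hCp⟩
  -- conclude
  constructor
  · -- no woman is worse off
    intro w
    by_cases hL : w ∈ L
    · exact hyp w hL
    · cases h' : μ'.μw w with
      | none =>
        cases h : μ.μw w with
        | none => left; rfl
        | some p =>
          have hpMp : p ∈ Mp := by
            refine key w hL p h ?_
            rw [h', wPref_eq]
            exact (hIR p w ((μ.consistent p w).mpr h)).2
          rw [hMpE] at hpMp
          exact absurd hpMp (Set.notMem_empty p)
      | some m' =>
        by_cases he : μ.μw w = some m'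
        · left; exact he.symm
        · have hm'mem : m' ∈ I.wpref w := hIRw' w m' h'
          by_cases hp : I.wPref w m' (μ.μw w)
          · right; exact ⟨m', rfl, hp⟩
          · rw [wPref_eq] at hp
            obtain ⟨p, hpw, hres⟩ := listPref_resolve hm'mem
              (fun b hb => (hIR b w ((μ.consistent b w).mpr hb)).2) he hp
            have hpMp : p ∈ Mp := by
              refine key w hL p hpw ?_
              rw [h', wPref_eq]
              exact hres
            rw [hMpE] at hpMp
            exact absurd hpMp (Set.notMem_empty p)
  · -- no man is better off
    intro m
    cases h' : μ'.μm m with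
    | none =>
      cases h : μ.μm m with
      | none => left; rfl
      | some u =>
        right
        refine ⟨u, rfl, ?_⟩
        rw [mPref_eq]
        exact (hIR m u h).1
    | some v =>
      have hvmem : v ∈ I.mpref m := hIRm' m v h'
      have hnMp : ¬ I.mPref m v (μ.μm m) := by
        intro hc
        have hmem : m ∈ Mp := ⟨v, h', hc⟩
        rw [hMpE] at hmem
        exact Set.notMem_empty m hmem
      cases h : μ.μm m with
      | none =>
        rw [h, mPref_eq] at hnMp
        exact absurd hvmem hnMp
      | some u =>
        by_cases huv : u = v
        · left; rw [huv]
        · rw [h, mPref_eq] at hnMp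
          obtain ⟨b, hb, hres⟩ := listPref_resolve hvmem
            (fun b hb => by rw [← Option.some_inj.mp hb]; exact (hIR m u h).1)
            (fun heq => huv (Option.some_inj.mp heq)) hnMp
          obtain rfl : u = b := Option.some_inj.mp hb
          right
          refine ⟨u, rfl, ?_⟩
          rw [mPref_eq]
          exact hres
end

section
/- There exists a stable matching instance with 6 men, 6 women, and a two-woman coalition {w₁, w₂} of manipulators using truncation manipulations such that the join (each woman getting her less preferred partner) of two individually-achievable feasible matchings is not itself achievable by any truncation manipulation of the coalition; hence the set of feasible matchings need not be a meet-semilattice under the women's preference order. -/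
open List

section Aux

variable {M W : Type*} [DecidableEq M] [DecidableEq W]

instance (I : SMInstance M W) (m : M) (w : W) (o : Option W) :
    Decidable (I.mPref m w o) :=
  match o with
  | some w' => inferInstanceAs (Decidable (w ∈ I.mpref m ∧
      (w' ∉ I.mpref m ∨ (I.mpref m).idxOf w < (I.mpref m).idxOf w')))
  | none => inferInstanceAs (Decidable (w ∈ I.mpref m))

instance (I : SMInstance M W) (w : W) (m : M) (o : Option M) :
    Decidable (I.wPref w m o) :=
  match o with
  | some m' => inferInstanceAs (Decidable (m ∈ I.wpref w ∧
      (m' ∉ I.wpref w ∨ (I.wpref w).idxOf m < (I.wpref w).idxOf m')))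
  | none => inferInstanceAs (Decidable (m ∈ I.wpref w))

instance [Fintype W] (I : SMInstance M W) (m : M) (o₁ o₂ : Option W) :
    Decidable (I.mWeak m o₁ o₂) := by
  unfold SMInstance.mWeak; infer_instance

instance [Fintype M] (I : SMInstance M W) (w : W) (o₁ o₂ : Option M) :
    Decidable (I.wWeak w o₁ o₂) := by
  unfold SMInstance.wWeak; infer_instance

instance [Fintype M] [Fintype W] (I : SMInstance M W) (μ : Matching M W) :
    Decidable (IndivRational I μ) := by
  unfold IndivRational; infer_instance

instance (I : SMInstance M W) (μ : Matching M W) (m : M) (w : W) :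
    Decidable (BlockingPair I μ m w) := by
  unfold BlockingPair; infer_instance

instance [Fintype M] [Fintype W] (I : SMInstance M W) (μ : Matching M W) :
    Decidable (IsStable I μ) := by
  unfold IsStable; infer_instance

/-- partner of `w` computed from the man-side function alone -/
def wpart (f : Fin 6 → Option (Fin 6)) (w : Fin 6) : Option (Fin 6) :=
  (List.finRange 6).find? (fun m => f m == some w)

lemma wpart_eq (μ : Matching (Fin 6) (Fin 6)) (w : Fin 6) : wpart μ.μm w = μ.μw w := by
  cases h : μ.μw w with
  | none =>
    apply List.find?_eq_none.mpr
    intro m _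
    simp only [beq_iff_eq]
    intro hc
    rw [(μ.consistent m w).mp hc] at h
    exact absurd h (by simp)
  | some m =>
    have hm : μ.μm m = some w := (μ.consistent m w).mpr h
    cases hf : wpart μ.μm w with
    | none =>
      have := List.find?_eq_none.mp hf m (List.mem_finRange m)
      simp [hm] at this
    | some m' =>
      have h2 : μ.μm m' = some w := by
        have := List.find?_some hf
        simpa using this
      rw [(μ.consistent m' w).mp h2] at h
      exact h

/-- candidate assignments for man `m` in any individually-rational matching -/
def cand (I : SMInstance (Fin 6) (Fin 6)) (m : Fin 6) : List (Option (Fin 6)) :=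
  none :: (I.mpref m).filterMap (fun w => if m ∈ I.wpref w then some (some w) else none)

/-- sufficient criterion for men-optimality, decidable by finite check -/
theorem menOpt_of (I : SMInstance (Fin 6) (Fin 6)) (μ : Matching (Fin 6) (Fin 6))
    (h1 : IsStable I μ)
    (h2 : ∀ o0 ∈ cand I 0, ∀ o1 ∈ cand I 1, ∀ o2 ∈ cand I 2,
      ∀ o3 ∈ cand I 3, ∀ o4 ∈ cand I 4, ∀ o5 ∈ cand I 5,
      (∀ m m' : Fin 6, ![o0,o1,o2,o3,o4,o5] m = ![o0,o1,o2,o3,o4,o5] m' →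
          (m = m' ∨ ![o0,o1,o2,o3,o4,o5] m = none)) →
      (∀ m : Fin 6, ∀ w ∈ I.mpref m, ¬ (![o0,o1,o2,o3,o4,o5] m ≠ some w ∧
          I.mPref m w (![o0,o1,o2,o3,o4,o5] m) ∧
          I.wPref w m (wpart ![o0,o1,o2,o3,o4,o5] w))) →
      ∀ m, I.mWeak m (μ.μm m) (![o0,o1,o2,o3,o4,o5] m)) :
    IsMenOptimal I μ := by
  refine ⟨h1, fun μ' hμ' m => ?_⟩
  have hf : ![μ'.μm 0, μ'.μm 1, μ'.μm 2, μ'.μm 3, μ'.μm 4, μ'.μm 5] = μ'.μm := by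
    funext x; fin_cases x <;> rfl
  have hmem : ∀ k, μ'.μm k ∈ cand I k := by
    intro k
    cases hk : μ'.μm k with
    | none => exact List.mem_cons_self
    | some w =>
      have hir := hμ'.1 k w hk
      refine List.mem_cons_of_mem _ (List.mem_filterMap.mpr ⟨w, hir.1, ?_⟩)
      rw [if_pos hir.2]
  have h3 := h2 (μ'.μm 0) (hmem 0) (μ'.μm 1) (hmem 1) (μ'.μm 2) (hmem 2)
      (μ'.μm 3) (hmem 3) (μ'.μm 4) (hmem 4) (μ'.μm 5) (hmem 5) ?_ ?_
  · rw [hf] at h3; exact h3 m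
  · rw [hf]
    intro a b hab
    cases ha : μ'.μm a with
    | none => exact Or.inr rfl
    | some w =>
      rw [ha] at hab
      have h1' := (μ'.consistent a w).mp ha
      have h2' := (μ'.consistent b w).mp hab.symm
      rw [h1'] at h2'
      exact Or.inl (Option.some.inj h2')
  · rw [hf]
    rintro a w - ⟨hne, hp, hq⟩
    rw [wpart_eq] at hq
    exact hμ'.2 a w ⟨hne, hp, hq⟩

def Iex : SMInstance (Fin 6) (Fin 6) where
  mpref := ![[0,2,4],[1,2,5],[2,3],[3,2],[4,0],[5,1]]
  wpref := ![[4,0],[5,1],[3,1,0,2],[2,3],[0,4],[1,5]]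
  mnodup := by decide
  wnodup := by decide

def I1ex : SMInstance (Fin 6) (Fin 6) where
  mpref := ![[0,2,4],[1,2,5],[2,3],[3,2],[4,0],[5,1]]
  wpref := ![[4],[5,1],[3,1,0,2],[2,3],[0,4],[1,5]]
  mnodup := by decide
  wnodup := by decide

def I2ex : SMInstance (Fin 6) (Fin 6) where
  mpref := ![[0,2,4],[1,2,5],[2,3],[3,2],[4,0],[5,1]]
  wpref := ![[4,0],[5],[3,1,0,2],[2,3],[0,4],[1,5]]
  mnodup := by decide
  wnodup := by decide

def mu0 : Matching (Fin 6) (Fin 6) := ⟨fun m => some m, fun w => some w, by decide⟩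

def mu1 : Matching (Fin 6) (Fin 6) :=
  ⟨![some 4, some 1, some 3, some 2, some 0, some 5],
   ![some 4, some 1, some 3, some 2, some 0, some 5], by decide⟩

def mu2 : Matching (Fin 6) (Fin 6) :=
  ⟨![some 0, some 5, some 3, some 2, some 4, some 1],
   ![some 0, some 5, some 3, some 2, some 4, some 1], by decide⟩

def muv : Matching (Fin 6) (Fin 6) :=
  ⟨![some 0, some 1, some 3, some 2, some 4, some 5],
   ![some 0, some 1, some 3, some 2, some 4, some 5], by decide⟩

lemma prefix_pair {α : Type*} {a b : α} {l : List α} (h : l <+: [a, b]) :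
    l = [] ∨ l = [a] ∨ l = [a, b] := by
  obtain ⟨t, ht⟩ := h
  match l, ht with
  | [], _ => exact Or.inl rfl
  | [x], ht =>
    obtain ⟨h1, -⟩ := List.cons.inj ht
    exact Or.inr (Or.inl (by rw [h1]))
  | [x, y], ht =>
    obtain ⟨h1, h2⟩ := List.cons.inj ht
    obtain ⟨h3, h4⟩ := List.cons.inj h2
    rw [h1, h3]
    exact Or.inr (Or.inr rfl)
  | x :: y :: z :: l, ht =>
    have := congrArg List.length ht
    simp at this

lemma SMInstance.ext' {I J : SMInstance M W} (h1 : I.mpref = J.mpref)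
    (h2 : I.wpref = J.wpref) : I = J := by
  cases I; cases J
  cases h1; cases h2
  rfl

end Aux

set_option maxRecDepth 10000
set_option maxHeartbeats 4000000

/-- there is a 6×6 instance with a two-woman coalition of truncation
manipulators in which the women-join (each woman getting her less preferred
partner) of two individually-achievable feasible matchings is not achievable by
any truncation manipulation of the coalition: the set of feasible matchings need
not be a meet-semilattice. -/
theorem no_meet_semilattice :
    ∃ (I : SMInstance (Fin 6) (Fin 6)) (w₁ w₂ : Fin 6), w₁ ≠ w₂ ∧
      ∃ μ₁ μ₂ μv : Matching (Fin 6) (Fin 6),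
        (∃ I₁, TruncManip I I₁ {w₁} ∧ IsMenOptimal I₁ μ₁ ∧ IsStable I μ₁) ∧
        (∃ I₂, TruncManip I I₂ {w₂} ∧ IsMenOptimal I₂ μ₂ ∧ IsStable I μ₂) ∧
        (∀ w, (μv.μw w = μ₁.μw w ∨ μv.μw w = μ₂.μw w) ∧
          I.wWeak w (μ₁.μw w) (μv.μw w) ∧ I.wWeak w (μ₂.μw w) (μv.μw w)) ∧
        ¬∃ I' : SMInstance (Fin 6) (Fin 6),
          TruncManip I I' {w₁, w₂} ∧ IsMenOptimal I' μv := by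
  refine ⟨Iex, 0, 1, by decide, mu1, mu2, muv, ?_, ?_, ?_, ?_⟩
  · refine ⟨I1ex, ⟨⟨rfl, ?_⟩, ?_⟩, ?_, by decide⟩
    · intro w hw
      simp only [Set.mem_singleton_iff] at hw
      fin_cases w <;> first | rfl | (exact absurd rfl hw)
    · intro w hw
      simp only [Set.mem_singleton_iff] at hw
      subst hw
      exact ⟨[0], rfl⟩
    · exact menOpt_of _ _ (by decide) (by decide)
  · refine ⟨I2ex, ⟨⟨rfl, ?_⟩, ?_⟩, ?_, by decide⟩
    · intro w hw
      simp only [Set.mem_singleton_iff] at hw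
      fin_cases w <;> first | rfl | (exact absurd rfl hw)
    · intro w hw
      simp only [Set.mem_singleton_iff] at hw
      subst hw
      exact ⟨[1], rfl⟩
    · exact menOpt_of _ _ (by decide) (by decide)
  · decide
  · rintro ⟨I', ⟨⟨hm, hw⟩, hpre⟩, hopt⟩
    have hIR := hopt.1.1
    have h0 : (0 : Fin 6) ∈ I'.wpref 0 := (hIR 0 0 rfl).2
    have h1 : (1 : Fin 6) ∈ I'.wpref 1 := (hIR 1 1 rfl).2
    have hp0 : I'.wpref 0 <+: [4, 0] := hpre 0 (by left; rfl)
    have hp1 : I'.wpref 1 <+: [5, 1] := hpre 1 (by right; rfl)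
    have e0 : I'.wpref 0 = [4, 0] := by
      rcases prefix_pair hp0 with h | h | h <;> rw [h] at h0 ⊢ <;> first | rfl | simp at h0
    have e1 : I'.wpref 1 = [5, 1] := by
      rcases prefix_pair hp1 with h | h | h <;> rw [h] at h1 ⊢ <;> first | rfl | simp at h1
    have hI : I' = Iex := by
      refine SMInstance.ext' hm (funext fun w => ?_)
      fin_cases w
      · exact e0
      · exact e1
      all_goals
        exact hw _ (by intro hc; rcases hc with hc | hc <;> exact absurd hc (by decide))
    rw [hI] at hopt
    have h3 := hopt.2 mu0 (by decide) 2
    exact absurd h3 (by decide)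
end
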